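/- arXiv:2402.16495 — 9 statements merged into one kernel-verified Lean document; each statement's English description precedes it below -/
import Mathlib

section
/- Let (𝔤, 𝔥, ρ, ψ) be a matched pair of Lie algebras. Then the direct sum 𝔤 ⊕ 𝔥 carries a Lie algebra structure (the bicrossed product) with bracket [(x,h),(y,k)] = ([x,y]_𝔤 + ψ_h y − ψ_k x, [h,k]_𝔥 + ρ_x k − ρ_y h). -/
/-- A bilinear map given as a plain two-argument function. -/
def Bilin (k : Type*) [Field k] {A B C : Type*} [AddCommGroup A] [Module k A]
    [AddCommGroup B] [Module k B] [AddCommGroup C] [Module k C] (f : A → B → C) : Prop :=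
  (∀ a a' b, f (a + a') b = f a b + f a' b) ∧
  (∀ (c : k) (a : A) (b : B), f (c • a) b = c • f a b) ∧
  (∀ a b b', f a (b + b') = f a b + f a b') ∧
  (∀ (c : k) (a : A) (b : B), f a (c • b) = c • f a b)

/-- A Lie algebra structure on `A`, given by a bilinear, alternating bracket
satisfying the Jacobi identity. -/
def IsLieBracketP (k : Type*) [Field k] {A : Type*} [AddCommGroup A] [Module k A]
    (μ : A → A → A) : Prop :=
  Bilin k μ ∧ (∀ x, μ x x = 0) ∧
  (∀ x y z, μ (μ x y) z + μ (μ y z) x + μ (μ z x) y = 0)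

/-- `ρ` is a representation (action map) of the Lie algebra `(A, μ)` on `B`. -/
def IsRepP (k : Type*) [Field k] {A B : Type*} [AddCommGroup A] [Module k A]
    [AddCommGroup B] [Module k B] (μ : A → A → A) (ρ : A → B → B) : Prop :=
  Bilin k ρ ∧ ∀ x y h, ρ (μ x y) h = ρ x (ρ y h) - ρ y (ρ x h)

/-- A matched pair of Lie algebras `(𝔤, 𝔥, ρ, ψ)`. -/
def IsMatchedPairP (k : Type*) [Field k] {G H : Type*} [AddCommGroup G] [Module k G]
    [AddCommGroup H] [Module k H]
    (μ : G → G → G) (ν : H → H → H) (ρ : G → H → H) (ψ : H → G → G) : Prop :=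
  IsLieBracketP k μ ∧ IsLieBracketP k ν ∧ IsRepP k μ ρ ∧ IsRepP k ν ψ ∧
  (∀ x h h', ρ x (ν h h') = ν (ρ x h) h' + ν h (ρ x h') + ρ (ψ h' x) h - ρ (ψ h x) h') ∧
  (∀ h x y, ψ h (μ x y) = μ (ψ h x) y + μ x (ψ h y) + ψ (ρ y h) x - ψ (ρ x h) y)

/-- The bicrossed product bracket on `G × H` associated with the data `(μ, ν, ρ, ψ)`. -/
def bicross {G H : Type*} [AddCommGroup G] [AddCommGroup H]
    (μ : G → G → G) (ν : H → H → H) (ρ : G → H → H) (ψ : H → G → G) :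
    G × H → G × H → G × H :=
  fun a b => (μ a.1 b.1 + ψ a.2 b.1 - ψ b.2 a.1, ν a.2 b.2 + ρ a.1 b.2 - ρ b.1 a.2)

lemma subHelper (k : Type*) [Field k] {A C : Type*} [AddCommGroup A] [Module k A]
    [AddCommGroup C] [Module k C] (g : A → C)
    (hadd : ∀ a a', g (a + a') = g a + g a')
    (hs : ∀ (c : k) (a : A), g (c • a) = c • g a) :
    ∀ a b, g (a - b) = g a - g b := by
  intro a b
  have h := hs (-1 : k) b
  simp only [neg_smul, one_smul] at h
  rw [sub_eq_add_neg, hadd, h, ← sub_eq_add_neg]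

/-- Let `(𝔤, 𝔥, ρ, ψ)` be a matched pair of Lie algebras. Then `𝔤 ⊕ 𝔥`
carries a Lie algebra structure (the bicrossed product) with bracket
`[(x,h),(y,k)] = ([x,y] + ψ_h y − ψ_k x, [h,k] + ρ_x k − ρ_y h)`. -/
theorem bicrossed_product_is_lie_algebra
    (k : Type*) [Field k] [CharZero k] {G H : Type*}
    [AddCommGroup G] [Module k G] [AddCommGroup H] [Module k H]
    (μ : G → G → G) (ν : H → H → H) (ρ : G → H → H) (ψ : H → G → G)
    (hmp : IsMatchedPairP k μ ν ρ ψ) :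
    IsLieBracketP k (bicross μ ν ρ ψ) := by
  obtain ⟨⟨⟨μa1, μs1, μa2, μs2⟩, μalt, μjac⟩, ⟨⟨νa1, νs1, νa2, νs2⟩, νalt, νjac⟩,
    ⟨⟨ρa1, ρs1, ρa2, ρs2⟩, ρrep⟩, ⟨⟨ψa1, ψs1, ψa2, ψs2⟩, ψrep⟩, hcρ, hcψ⟩ := hmp
  have μanti : ∀ a b, μ a b = - μ b a := by
    intro a b
    have h := μalt (a + b)
    rw [μa1, μa2, μa2, μalt, μalt, zero_add, add_zero] at h
    exact eq_neg_of_add_eq_zero_left h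
  have νanti : ∀ a b, ν a b = - ν b a := by
    intro a b
    have h := νalt (a + b)
    rw [νa1, νa2, νa2, νalt, νalt, zero_add, add_zero] at h
    exact eq_neg_of_add_eq_zero_left h
  have μsub1 : ∀ a b c, μ (a - b) c = μ a c - μ b c := fun a b c =>
    subHelper k (fun t => μ t c) (fun a a' => μa1 a a' c) (fun s a => μs1 s a c) a b
  have μsub2 : ∀ a b c, μ a (b - c) = μ a b - μ a c := fun a b c =>
    subHelper k (fun t => μ a t) (fun u u' => μa2 a u u') (fun s u => μs2 s a u) b c
  have νsub1 : ∀ a b c, ν (a - b) c = ν a c - ν b c := fun a b c =>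
    subHelper k (fun t => ν t c) (fun a a' => νa1 a a' c) (fun s a => νs1 s a c) a b
  have νsub2 : ∀ a b c, ν a (b - c) = ν a b - ν a c := fun a b c =>
    subHelper k (fun t => ν a t) (fun u u' => νa2 a u u') (fun s u => νs2 s a u) b c
  have ρsub1 : ∀ a b c, ρ (a - b) c = ρ a c - ρ b c := fun a b c =>
    subHelper k (fun t => ρ t c) (fun a a' => ρa1 a a' c) (fun s a => ρs1 s a c) a b
  have ρsub2 : ∀ a b c, ρ a (b - c) = ρ a b - ρ a c := fun a b c =>
    subHelper k (fun t => ρ a t) (fun u u' => ρa2 a u u') (fun s u => ρs2 s a u) b c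
  have ψsub1 : ∀ a b c, ψ (a - b) c = ψ a c - ψ b c := fun a b c =>
    subHelper k (fun t => ψ t c) (fun a a' => ψa1 a a' c) (fun s a => ψs1 s a c) a b
  have ψsub2 : ∀ a b c, ψ a (b - c) = ψ a b - ψ a c := fun a b c =>
    subHelper k (fun t => ψ a t) (fun u u' => ψa2 a u u') (fun s u => ψs2 s a u) b c
  refine ⟨⟨?_, ?_, ?_, ?_⟩, ?_, ?_⟩
  · intro a a' b
    simp only [bicross, Prod.fst_add, Prod.snd_add, Prod.mk_add_mk, Prod.mk.injEq,
      μa1, νa1, ψa1, ψa2, ρa1, ρa2]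
    try constructor <;> abel
  · intro c a b
    simp only [bicross, Prod.smul_fst, Prod.smul_snd, Prod.smul_mk, Prod.mk.injEq,
      μs1, νs1, ψs1, ψs2, ρs1, ρs2, smul_add, smul_sub]
    try constructor <;> abel
  · intro a b b'
    simp only [bicross, Prod.fst_add, Prod.snd_add, Prod.mk_add_mk, Prod.mk.injEq,
      μa2, νa2, ψa1, ψa2, ρa1, ρa2]
    try constructor <;> abel
  · intro c a b
    simp only [bicross, Prod.smul_fst, Prod.smul_snd, Prod.smul_mk, Prod.mk.injEq,
      μs2, νs2, ψs1, ψs2, ρs1, ρs2, smul_add, smul_sub]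
    try constructor <;> abel
  · intro a
    simp [bicross, μalt, νalt]
  · rintro ⟨x, h⟩ ⟨y, kk⟩ ⟨z, l⟩
    simp only [bicross, Prod.mk_add_mk, Prod.mk_eq_zero]
    constructor
    · simp only [μa1, μsub1, μa2, μsub2, ψa1, ψsub1, ψa2, ψsub2, ψrep, hcψ]
      rw [eq_neg_of_add_eq_zero_right (μjac x y z)]
      rw [μanti x (ψ l y), μanti y (ψ h z), μanti z (ψ kk x)]
      abel
    · simp only [νa1, νsub1, νa2, νsub2, ρa1, ρsub1, ρa2, ρsub2, ρrep, hcρ]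
      rw [eq_neg_of_add_eq_zero_right (νjac h kk l)]
      rw [νanti h (ρ z kk), νanti kk (ρ x l), νanti l (ρ y h)]
      abel
end

section
/- Let 𝔤 and 𝔥 be Lie algebras and suppose the direct sum 𝔤 ⊕ 𝔥 carries a Lie algebra structure for which 𝔤 ⊕ 0 and 0 ⊕ 𝔥 are Lie subalgebras. Define ρ_x h := pr₂[(x,0),(0,h)] and ψ_h x := pr₁[(0,h),(x,0)]. Then (𝔤, 𝔥, ρ, ψ) is a matched pair of Lie algebras, and the Lie bracket on 𝔤 ⊕ 𝔥 equals [(x,h),(y,k)] = ([x,y]_𝔤 + ψ_h y − ψ_k x, [h,k]_𝔥 + ρ_x k − ρ_y h). -/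
section helpers
variable {k : Type*} [Field k] {A B C : Type*} [AddCommGroup A] [Module k A]
  [AddCommGroup B] [Module k B] [AddCommGroup C] [Module k C]

theorem Bilin.zero_left' {f : A → B → C} (hf : Bilin k f) (b : B) : f 0 b = 0 := by
  have := hf.2.1 0 0 b; simpa using this

theorem Bilin.zero_right' {f : A → B → C} (hf : Bilin k f) (a : A) : f a 0 = 0 := by
  have := hf.2.2.2 0 a 0; simpa using this

theorem Bilin.neg_left' {f : A → B → C} (hf : Bilin k f) (a : A) (b : B) :
    f (-a) b = - f a b := by
  have := hf.2.1 (-1) a b; simpa using this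

theorem Bilin.neg_right' {f : A → B → C} (hf : Bilin k f) (a : A) (b : B) :
    f a (-b) = - f a b := by
  have := hf.2.2.2 (-1) a b; simpa using this

theorem Bilin.sub_left' {f : A → B → C} (hf : Bilin k f) (a a' : A) (b : B) :
    f (a - a') b = f a b - f a' b := by
  rw [sub_eq_add_neg, hf.1, hf.neg_left', sub_eq_add_neg]

theorem Bilin.sub_right' {f : A → B → C} (hf : Bilin k f) (a : A) (b b' : B) :
    f a (b - b') = f a b - f a b' := by
  rw [sub_eq_add_neg, hf.2.2.1, hf.neg_right', sub_eq_add_neg]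

theorem alt_antisymm {f : A → A → A} (hf : Bilin k f) (halt : ∀ x, f x x = 0)
    (a b : A) : f a b = - f b a := by
  have h := halt (a + b)
  rw [hf.1, hf.2.2.1, hf.2.2.1, halt a, halt b] at h
  exact eq_neg_of_add_eq_zero_left (by simpa using h)
end helpers

/-- If `𝔤 ⊕ 𝔥` carries a Lie algebra structure for which `𝔤` and `𝔥` are
Lie subalgebras, then with `ρ_x h := pr₂[(x,0),(0,h)]` and `ψ_h x := pr₁[(0,h),(x,0)]`, the
quadruple `(𝔤, 𝔥, ρ, ψ)` is a matched pair of Lie algebras, and the bracket on `𝔤 ⊕ 𝔥` is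
the bicrossed product bracket. -/
theorem matched_pair_from_direct_sum_lie_structure
    (k : Type*) [Field k] [CharZero k] {G H : Type*}
    [AddCommGroup G] [Module k G] [AddCommGroup H] [Module k H]
    (μ : G → G → G) (ν : H → H → H) (br : G × H → G × H → G × H)
    (hμ : IsLieBracketP k μ) (hν : IsLieBracketP k ν)
    (hbr : IsLieBracketP k br)
    (hsubG : ∀ x y : G, br (x, 0) (y, 0) = (μ x y, 0))
    (hsubH : ∀ h h' : H, br (0, h) (0, h') = (0, ν h h')) :
    IsMatchedPairP k μ ν
      (fun x h => (br (x, 0) (0, h)).2) (fun h x => (br (0, h) (x, 0)).1) ∧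
    ∀ a b : G × H,
      br a b =
        bicross μ ν (fun x h => (br (x, 0) (0, h)).2) (fun h x => (br (0, h) (x, 0)).1) a b := by
  obtain ⟨hbbil, hbalt, hbjac⟩ := hbr
  set ρ : G → H → H := fun x h => (br (x, 0) (0, h)).2 with hρdef
  set ψ : H → G → G := fun h x => (br (0, h) (x, 0)).1 with hψdef
  have hba : ∀ a b, br a b = - br b a := alt_antisymm hbbil hbalt
  have hmix : ∀ (x : G) (h : H), br (x, 0) (0, h) = (-(ψ h x), ρ x h) := by
    intro x h
    have h1 : (br (x, 0) (0, h)).1 = -(ψ h x) := by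
      rw [hba (x, 0) (0, h)]; simp [hψdef]
    exact Prod.ext h1 rfl
  have hmix' : ∀ (x : G) (h : H), br (0, h) (x, 0) = (ψ h x, -(ρ x h)) := by
    intro x h
    have h2 : (br (0, h) (x, 0)).2 = -(ρ x h) := by
      rw [hba (0, h) (x, 0)]; simp [hρdef]
    exact Prod.ext rfl h2
  have hρbil : Bilin k ρ := by
    refine ⟨fun x x' h => ?_, fun c x h => ?_, fun x h h' => ?_, fun c x h => ?_⟩
    · show (br (x + x', 0) (0, h)).2 = _
      rw [show ((x + x', (0:H)) : G × H) = (x, 0) + (x', 0) by simp, hbbil.1]; rfl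
    · show (br (c • x, 0) (0, h)).2 = _
      rw [show ((c • x, (0:H)) : G × H) = c • (x, 0) by simp, hbbil.2.1]; rfl
    · show (br (x, 0) (0, h + h')).2 = _
      rw [show (((0:G), h + h') : G × H) = (0, h) + (0, h') by simp, hbbil.2.2.1]; rfl
    · show (br (x, 0) (0, c • h)).2 = _
      rw [show (((0:G), c • h) : G × H) = c • (0, h) by simp, hbbil.2.2.2]; rfl
  have hψbil : Bilin k ψ := by
    refine ⟨fun h h' x => ?_, fun c h x => ?_, fun h x x' => ?_, fun c h x => ?_⟩
    · show (br (0, h + h') (x, 0)).1 = _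
      rw [show (((0:G), h + h') : G × H) = (0, h) + (0, h') by simp, hbbil.1]; rfl
    · show (br (0, c • h) (x, 0)).1 = _
      rw [show (((0:G), c • h) : G × H) = c • (0, h) by simp, hbbil.2.1]; rfl
    · show (br (0, h) (x + x', 0)).1 = _
      rw [show ((x + x', (0:H)) : G × H) = (x, 0) + (x', 0) by simp, hbbil.2.2.1]; rfl
    · show (br (0, h) (c • x, 0)).1 = _
      rw [show ((c • x, (0:H)) : G × H) = c • (x, 0) by simp, hbbil.2.2.2]; rfl
  have hfull : ∀ a b : G × H,
      br a b = (μ a.1 b.1 + ψ a.2 b.1 - ψ b.2 a.1, ν a.2 b.2 + ρ a.1 b.2 - ρ b.1 a.2) := by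
    rintro ⟨x, h⟩ ⟨y, kk⟩
    rw [show ((x, h) : G × H) = (x, 0) + (0, h) by simp,
        show ((y, kk) : G × H) = (y, 0) + (0, kk) by simp,
        hbbil.1, hbbil.2.2.1, hbbil.2.2.1, hsubG, hsubH, hmix, hmix']
    refine Prod.ext ?_ ?_ <;> simp <;> abel
  have zρl := hρbil.zero_left'; have zρr := hρbil.zero_right'
  have zψl := hψbil.zero_left'; have zψr := hψbil.zero_right'
  have zμl := hμ.1.zero_left'; have zμr := hμ.1.zero_right'
  have zνl := hν.1.zero_left'; have zνr := hν.1.zero_right'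
  have nμl := hμ.1.neg_left'; have nμr := hμ.1.neg_right'
  have nνl := hν.1.neg_left'; have nνr := hν.1.neg_right'
  have nρl := hρbil.neg_left'; have nρr := hρbil.neg_right'
  have nψl := hψbil.neg_left'; have nψr := hψbil.neg_right'
  have jac1 : ∀ (x y : G) (h : H), True := fun _ _ _ => trivial
  constructor
  · refine ⟨hμ, hν, ⟨hρbil, ?_⟩, ⟨hψbil, ?_⟩, ?_, ?_⟩
    · intro x y h
      have j := hbjac (x, 0) (y, 0) (0, h)
      simp [hfull, zρl, zρr, zψl, zψr, zμl, zμr, zνl, zνr,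
        nμl, nμr, nνl, nνr, nρl, nρr, nψl, nψr, Prod.ext_iff] at j
      rw [← sub_eq_zero, ← j.2]; abel
    · intro h h' x
      have j := hbjac (0, h) (0, h') (x, 0)
      simp [hfull, zρl, zρr, zψl, zψr, zμl, zμr, zνl, zνr,
        nμl, nμr, nνl, nνr, nρl, nρr, nψl, nψr, Prod.ext_iff] at j
      rw [← sub_eq_zero, ← j.1]; abel
    · intro x h h'
      have j := hbjac (0, h) (0, h') (x, 0)
      simp [hfull, zρl, zρr, zψl, zψr, zμl, zμr, zνl, zνr,
        nμl, nμr, nνl, nνr, nρl, nρr, nψl, nψr, Prod.ext_iff] at j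
      rw [show ν h (ρ x h') = -(ν (ρ x h') h) from alt_antisymm hν.1 hν.2.1 _ _,
        ← sub_eq_zero, ← neg_eq_zero.mpr j.2]; abel
    · intro h x y
      have j := hbjac (x, 0) (y, 0) (0, h)
      simp [hfull, zρl, zρr, zψl, zψr, zμl, zμr, zνl, zνr,
        nμl, nμr, nνl, nνr, nρl, nρr, nψl, nψr, Prod.ext_iff] at j
      rw [show μ x (ψ h y) = -(μ (ψ h y) x) from alt_antisymm hμ.1 hμ.2.1 _ _,
        ← sub_eq_zero, ← neg_eq_zero.mpr j.1]; abel
  · intro a b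
    simpa [bicross] using hfull a b
end

section
/- Let (𝔤, 𝔥, ρ, ψ) be a matched pair of Lie algebras and (V, W, α, β) a representation of it, with V, W representations of both 𝔤 (via ρ_V, ρ_W) and 𝔥 (via ψ_V, ψ_W). Then the quadruple (𝔤 ⋉ V, 𝔥 ⋉ W, ρ ⋉ α, ψ ⋉ β) is a matched pair of Lie algebras, where 𝔤 ⋉ V and 𝔥 ⋉ W are the semidirect product Lie algebras, (ρ ⋉ α)_{(x,v)}(h,w) = (ρ_x h, (ρ_W)_x w + α_v h) and (ψ ⋉ β)_{(h,w)}(x,u) = (ψ_h x, (ψ_V)_h u + β_w x). -/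
/-- A representation `(V, W, α, β)` of a matched pair of Lie algebras `(𝔤, 𝔥, ρ, ψ)`:
`V, W` are representations of both `𝔤` and `𝔥`, and `α : V × 𝔥 → W`, `β : W × 𝔤 → V`
are pairing maps satisfying the six compatibility identities. -/
def IsMPRepP (k : Type*) [Field k] {G H V W : Type*} [AddCommGroup G] [Module k G]
    [AddCommGroup H] [Module k H] [AddCommGroup V] [Module k V] [AddCommGroup W] [Module k W]
    (μ : G → G → G) (ν : H → H → H) (ρ : G → H → H) (ψ : H → G → G)
    (ρV : G → V → V) (ψV : H → V → V) (ρW : G → W → W) (ψW : H → W → W)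
    (α : V → H → W) (β : W → G → V) : Prop :=
  IsRepP k μ ρV ∧ IsRepP k ν ψV ∧ IsRepP k μ ρW ∧ IsRepP k ν ψW ∧
  Bilin k α ∧ Bilin k β ∧
  (∀ x v h, α (ρV x v) h = ρW x (α v h) - α v (ρ x h)) ∧
  (∀ h w x, β (ψW h w) x = ψV h (β w x) - β w (ψ h x)) ∧
  (∀ x h w, ρW x (ψW h w) = ψW (ρ x h) w + ψW h (ρW x w) + α (β w x) h - ρW (ψ h x) w) ∧
  (∀ v h h', α v (ν h h') = - ψW h' (α v h) + ψW h (α v h') + α (ψV h' v) h - α (ψV h v) h') ∧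
  (∀ h x v, ψV h (ρV x v) = ρV (ψ h x) v + ρV x (ψV h v) + β (α v h) x - ψV (ρ x h) v) ∧
  (∀ w x y, β w (μ x y) = - ρV y (β w x) + ρV x (β w y) + β (ρW y w) x - β (ρW x w) y)


section bilinHelpers
variable {k : Type*} [Field k] {A B C : Type*} [AddCommGroup A] [Module k A]
    [AddCommGroup B] [Module k B] [AddCommGroup C] [Module k C] {f : A → B → C}

lemma Bilin.addl (h : Bilin k f) (a a' b) : f (a + a') b = f a b + f a' b := h.1 a a' b
lemma Bilin.addr (h : Bilin k f) (a b b') : f a (b + b') = f a b + f a b' := h.2.2.1 a b b'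
lemma Bilin.smull (h : Bilin k f) (c : k) (a b) : f (c • a) b = c • f a b := h.2.1 c a b
lemma Bilin.smulr (h : Bilin k f) (c : k) (a b) : f a (c • b) = c • f a b := h.2.2.2 c a b
lemma Bilin.negl (h : Bilin k f) (a b) : f (-a) b = - f a b := by
  simpa using h.smull (-1 : k) a b
lemma Bilin.negr (h : Bilin k f) (a b) : f a (-b) = - f a b := by
  simpa using h.smulr (-1 : k) a b
lemma Bilin.subl (h : Bilin k f) (a a' b) : f (a - a') b = f a b - f a' b := by
  rw [sub_eq_add_neg, h.addl, h.negl, sub_eq_add_neg]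
lemma Bilin.subr (h : Bilin k f) (a b b') : f a (b - b') = f a b - f a b' := by
  rw [sub_eq_add_neg, h.addr, h.negr, sub_eq_add_neg]
end bilinHelpers

/-- Semidirect product. If `(V, W, α, β)` is a representation of a matched
pair of Lie algebras `(𝔤, 𝔥, ρ, ψ)`, then `(𝔤 ⋉ V, 𝔥 ⋉ W, ρ ⋉ α, ψ ⋉ β)` is again a
matched pair of Lie algebras. -/
theorem semidirect_product_matched_pair
    (k : Type*) [Field k] [CharZero k] {G H V W : Type*}
    [AddCommGroup G] [Module k G] [AddCommGroup H] [Module k H]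
    [AddCommGroup V] [Module k V] [AddCommGroup W] [Module k W]
    (μ : G → G → G) (ν : H → H → H) (ρ : G → H → H) (ψ : H → G → G)
    (ρV : G → V → V) (ψV : H → V → V) (ρW : G → W → W) (ψW : H → W → W)
    (α : V → H → W) (β : W → G → V)
    (hmp : IsMatchedPairP k μ ν ρ ψ)
    (hrep : IsMPRepP k μ ν ρ ψ ρV ψV ρW ψW α β) :
    IsMatchedPairP k
      (fun (a b : G × V) => (μ a.1 b.1, ρV a.1 b.2 - ρV b.1 a.2))
      (fun (a b : H × W) => (ν a.1 b.1, ψW a.1 b.2 - ψW b.1 a.2))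
      (fun (a : G × V) (b : H × W) => (ρ a.1 b.1, ρW a.1 b.2 + α a.2 b.1))
      (fun (a : H × W) (b : G × V) => (ψ a.1 b.1, ψV a.1 b.2 + β a.2 b.1)) := by
  obtain ⟨⟨bμ, hμa, hμj⟩, ⟨bν, hνa, hνj⟩, ⟨bρ, hρ⟩, ⟨bψ, hψ⟩, hc1, hc2⟩ := hmp
  obtain ⟨⟨bρV, hρV⟩, ⟨bψV, hψV⟩, ⟨bρW, hρW⟩, ⟨bψW, hψW⟩, bα, bβ, r1, r2, r3, r4, r5, r6⟩ := hrep
  refine ⟨⟨⟨?_, ?_, ?_, ?_⟩, ?_, ?_⟩, ⟨⟨?_, ?_, ?_, ?_⟩, ?_, ?_⟩,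
    ⟨⟨?_, ?_, ?_, ?_⟩, ?_⟩, ⟨⟨?_, ?_, ?_, ?_⟩, ?_⟩, ?_, ?_⟩ <;>
  intros <;> refine Prod.ext ?_ ?_ <;>
  simp only [Prod.fst_add, Prod.snd_add, Prod.fst_sub, Prod.snd_sub, Prod.fst_neg, Prod.snd_neg, Prod.smul_fst, Prod.smul_snd, Prod.fst_zero,
    Prod.snd_zero, smul_add, smul_sub,
    bμ.addl, bμ.addr, bμ.subl, bμ.subr, bμ.smull, bμ.smulr,
    bν.addl, bν.addr, bν.subl, bν.subr, bν.smull, bν.smulr,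
    bρ.addl, bρ.addr, bρ.subl, bρ.subr, bρ.smull, bρ.smulr,
    bψ.addl, bψ.addr, bψ.subl, bψ.subr, bψ.smull, bψ.smulr,
    bρV.addl, bρV.addr, bρV.subl, bρV.subr, bρV.smull, bρV.smulr,
    bψV.addl, bψV.addr, bψV.subl, bψV.subr, bψV.smull, bψV.smulr,
    bρW.addl, bρW.addr, bρW.subl, bρW.subr, bρW.smull, bρW.smulr,
    bψW.addl, bψW.addr, bψW.subl, bψW.subr, bψW.smull, bψW.smulr,
    bα.addl, bα.addr, bα.subl, bα.subr, bα.smull, bα.smulr,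
    bβ.addl, bβ.addr, bβ.subl, bβ.subr, bβ.smull, bβ.smulr,
    hρ, hψ, hρV, hψV, hρW, hψW, hc1, hc2, r1, r2, r3, r4, r5, r6, hμa, hνa, hμj, hνj] <;>
  try abel
end

section
/- Let (𝔤, 𝔥, ρ, ψ) be a matched pair of Lie algebras and (V, W, α, β) a representation of it. Then V ⊕ W is a representation of the bicrossed product Lie algebra 𝔤 ⋈ 𝔥 via (ρ_⋈)_{(x,h)}(v,w) = ((ρ_V)_x v + (ψ_V)_h v − β_w x, (ψ_W)_h w + (ρ_W)_x w − α_v h). -/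
lemma Bilin.subl_s6 (k : Type*) [Field k] {A B C : Type*} [AddCommGroup A] [Module k A]
    [AddCommGroup B] [Module k B] [AddCommGroup C] [Module k C] {f : A → B → C}
    (hf : Bilin k f) : ∀ a a' b, f (a - a') b = f a b - f a' b := by
  intro a a' b
  have h := hf.1 (a - a') a' b
  rw [sub_add_cancel] at h
  exact eq_sub_of_add_eq h.symm

lemma Bilin.subr_s6 (k : Type*) [Field k] {A B C : Type*} [AddCommGroup A] [Module k A]
    [AddCommGroup B] [Module k B] [AddCommGroup C] [Module k C] {f : A → B → C}
    (hf : Bilin k f) : ∀ a b b', f a (b - b') = f a b - f a b' := by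
  intro a b b'
  have h := hf.2.2.1 a (b - b') b'
  rw [sub_add_cancel] at h
  exact eq_sub_of_add_eq h.symm

/-- If `(V, W, α, β)` is a representation of a matched pair of Lie algebras
`(𝔤, 𝔥, ρ, ψ)`, then `V ⊕ W` is a representation of the bicrossed product Lie algebra
`𝔤 ⋈ 𝔥` via `(ρ_⋈)_{(x,h)}(v,w) = ((ρ_V)_x v + (ψ_V)_h v − β_w x, (ψ_W)_h w + (ρ_W)_x w − α_v h)`. -/
theorem bicrossed_product_representation
    (k : Type*) [Field k] [CharZero k] {G H V W : Type*}
    [AddCommGroup G] [Module k G] [AddCommGroup H] [Module k H]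
    [AddCommGroup V] [Module k V] [AddCommGroup W] [Module k W]
    (μ : G → G → G) (ν : H → H → H) (ρ : G → H → H) (ψ : H → G → G)
    (ρV : G → V → V) (ψV : H → V → V) (ρW : G → W → W) (ψW : H → W → W)
    (α : V → H → W) (β : W → G → V)
    (hmp : IsMatchedPairP k μ ν ρ ψ)
    (hrep : IsMPRepP k μ ν ρ ψ ρV ψV ρW ψW α β) :
    IsRepP k (bicross μ ν ρ ψ)
      (fun (a : G × H) (p : V × W) =>
        (ρV a.1 p.1 + ψV a.2 p.1 - β p.2 a.1, ψW a.2 p.2 + ρW a.1 p.2 - α p.1 a.2)) := by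
  obtain ⟨hρV, hψV, hρW, hψW, hα, hβ, i7, i8, i9, i10, i11, i12⟩ := hrep
  obtain ⟨hρVb, hρVr⟩ := hρV
  obtain ⟨hψVb, hψVr⟩ := hψV
  obtain ⟨hρWb, hρWr⟩ := hρW
  obtain ⟨hψWb, hψWr⟩ := hψW
  constructor
  · refine ⟨?_, ?_, ?_, ?_⟩
    · intro a a' p
      simp only [Prod.fst_add, Prod.snd_add, Prod.mk_add_mk, Prod.mk.injEq,
        hρVb.1, hψVb.1, hρWb.1, hψWb.1, hα.2.2.1, hβ.2.2.1]
      constructor <;> abel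
    · intro c a p
      simp only [Prod.smul_fst, Prod.smul_snd, Prod.smul_mk, Prod.mk.injEq,
        hρVb.2.1, hψVb.2.1, hρWb.2.1, hψWb.2.1, hα.2.2.2, hβ.2.2.2,
        smul_add, smul_sub]

    · intro a p p'
      simp only [Prod.fst_add, Prod.snd_add, Prod.mk_add_mk, Prod.mk.injEq,
        hρVb.2.2.1, hψVb.2.2.1, hρWb.2.2.1, hψWb.2.2.1, hα.1, hβ.1]
      constructor <;> abel
    · intro c a p
      simp only [Prod.smul_fst, Prod.smul_snd, Prod.smul_mk, Prod.mk.injEq,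
        hρVb.2.2.2, hψVb.2.2.2, hρWb.2.2.2, hψWb.2.2.2, hα.2.1, hβ.2.1,
        smul_add, smul_sub]

  · rintro ⟨x, h⟩ ⟨y, kk⟩ ⟨v, w⟩
    simp only [bicross, Prod.mk.injEq, Prod.mk_sub_mk]
    constructor
    · simp only [hρVb.1, hρVb.2.2.1, Bilin.subl_s6 k hρVb, Bilin.subr_s6 k hρVb,
        hψVb.1, hψVb.2.2.1, Bilin.subl_s6 k hψVb, Bilin.subr_s6 k hψVb,
        hβ.1, hβ.2.2.1, Bilin.subl_s6 k hβ, Bilin.subr_s6 k hβ,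
        hρVr, hψVr, i8, i11, i12]
      abel
    · simp only [hρWb.1, hρWb.2.2.1, Bilin.subl_s6 k hρWb, Bilin.subr_s6 k hρWb,
        hψWb.1, hψWb.2.2.1, Bilin.subl_s6 k hψWb, Bilin.subr_s6 k hψWb,
        hα.1, hα.2.2.1, Bilin.subl_s6 k hα, Bilin.subr_s6 k hα,
        hρWr, hψWr, i7, i9, i10]
      abel
end

section
/- Let (𝔤, 𝔥, ρ, ψ) be a matched pair of Lie algebras and (V, W, α, β) a representation of it. Define α*: W* × 𝔥 → V* and β*: V* × 𝔤 → W* by (α*_p h)(v) = −p(α_v h) and (β*_q x)(w) = −q(β_w x), and let 𝔤 and 𝔥 act on V* and W* by the dual (contragredient) actions. Then (W*, V*, α*, β*) is a representation of the matched pair (𝔤, 𝔥, ρ, ψ). -/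
open Module

private lemma dual_isRep (k : Type*) [Field k] {A B : Type*} [AddCommGroup A] [Module k A]
    [AddCommGroup B] [Module k B] (μ : A → A → A) (ρB : A →ₗ[k] B →ₗ[k] B)
    (h : IsRepP k μ fun x b => ρB x b) :
    IsRepP k μ (fun x (q : Module.Dual k B) => -((ρB x).dualMap q)) := by
  obtain ⟨-, hbr⟩ := h
  simp only at hbr
  refine ⟨⟨fun a a' q => ?_, fun c a q => ?_, fun a q q' => ?_, fun c a q => ?_⟩,
    fun x y q => ?_⟩ <;> ext b <;>
    simp [hbr] <;> abel

/-- Dual representation. If `(V, W, α, β)` is a representation of a matched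
pair of Lie algebras `(𝔤, 𝔥, ρ, ψ)`, then `(W*, V*, α*, β*)`, with the dual
(contragredient) actions and `(α*_p h)(v) = −p(α_v h)`, `(β*_q x)(w) = −q(β_w x)`, is also a
representation of `(𝔤, 𝔥, ρ, ψ)`. -/
theorem dual_representation_of_matched_pair
    (k : Type*) [Field k] [CharZero k] {G H V W : Type*}
    [AddCommGroup G] [Module k G] [AddCommGroup H] [Module k H]
    [AddCommGroup V] [Module k V] [AddCommGroup W] [Module k W]
    (μ : G → G → G) (ν : H → H → H) (ρ : G → H → H) (ψ : H → G → G)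
    (ρV : G →ₗ[k] V →ₗ[k] V) (ψV : H →ₗ[k] V →ₗ[k] V)
    (ρW : G →ₗ[k] W →ₗ[k] W) (ψW : H →ₗ[k] W →ₗ[k] W)
    (α : V →ₗ[k] H →ₗ[k] W) (β : W →ₗ[k] G →ₗ[k] V)
    (hmp : IsMatchedPairP k μ ν ρ ψ)
    (hrep : IsMPRepP k μ ν ρ ψ (fun x v => ρV x v) (fun h v => ψV h v)
      (fun x w => ρW x w) (fun h w => ψW h w) (fun v h => α v h) (fun w x => β w x)) :
    IsMPRepP k μ ν ρ ψ
      (fun (x : G) (p : Dual k W) => -((ρW x).dualMap p))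
      (fun (h : H) (p : Dual k W) => -((ψW h).dualMap p))
      (fun (x : G) (q : Dual k V) => -((ρV x).dualMap q))
      (fun (h : H) (q : Dual k V) => -((ψV h).dualMap q))
      (fun (p : Dual k W) (h : H) => -((α.flip h).dualMap p))
      (fun (q : Dual k V) (x : G) => -((β.flip x).dualMap q)) := by
  obtain ⟨h1, h2, h3, h4, hα, hβ, h7, h8, h9, h10, h11, h12⟩ := hrep
  simp only at h7 h8 h9 h10 h11 h12
  refine ⟨dual_isRep k μ ρW h3, dual_isRep k ν ψW h4, dual_isRep k μ ρV h1,
    dual_isRep k ν ψV h2,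
    ⟨fun a a' b => ?_, fun c a b => ?_, fun a b b' => ?_, fun c a b => ?_⟩,
    ⟨fun a a' b => ?_, fun c a b => ?_, fun a b b' => ?_, fun c a b => ?_⟩,
    fun x p h => ?_, fun h q x => ?_, fun x h q => ?_, fun p h h' => ?_,
    fun h x p => ?_, fun q x y => ?_⟩ <;> ext v <;>
    simp [h7, h8, h9, h10, h11, h12] <;> abel
end

section
/- Let (𝔤, 𝔥, ρ, ψ) be a matched pair of Lie algebras. Then (𝔥*, 𝔤*, α, β) is a representation of (𝔤, 𝔥, ρ, ψ) (the coadjoint representation), where (α_p h)(x) = −p(ρ_x h) and (β_q x)(h) = −q(ψ_h x), and 𝔤 acts on 𝔥* and 𝔤* by the duals of ρ and ad_𝔤 respectively, while 𝔥 acts on 𝔥* and 𝔤* by the duals of ad_𝔥 and ψ. -/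
section Helpers
variable (k : Type*) [Field k] {A : Type*} [AddCommGroup A] [Module k A]

lemma bilin_neg_left {B C : Type*} [AddCommGroup B] [Module k B] [AddCommGroup C] [Module k C]
    {f : A → B → C} (hb : Bilin k f) (a : A) (b : B) : f (-a) b = - f a b := by
  have := hb.2.1 (-1 : k) a b; simpa using this

lemma lie_antiP {μ : A → A → A} (h : IsLieBracketP k μ) (x y : A) : μ x y = - μ y x := by
  have h2 := h.2.1 (x + y)
  rw [h.1.1, h.1.2.2.1, h.1.2.2.1, h.2.1 x, h.2.1 y] at h2
  have h1 : μ x y + μ y x = 0 := by simpa using h2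
  exact eq_neg_of_add_eq_zero_left h1

lemma lie_adP {μ : A → A → A} (h : IsLieBracketP k μ) (x y z : A) :
    μ (μ x y) z = μ x (μ y z) - μ y (μ x z) := by
  have hj := h.2.2 x y z
  have h1 : μ (μ y z) x = -μ x (μ y z) := lie_antiP k h _ _
  have h2 : μ (μ z x) y = μ y (μ x z) := by
    rw [lie_antiP k h z x, bilin_neg_left k h.1, lie_antiP k h (μ x z) y, neg_neg]
  rw [h1, h2] at hj
  have h3 : μ (μ x y) z - (μ x (μ y z) - μ y (μ x z)) = 0 := by rw [← hj]; abel
  exact sub_eq_zero.mp h3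

end Helpers

open Module

/-- Coadjoint representation. For a matched pair of Lie algebras
`(𝔤, 𝔥, ρ, ψ)`, the quadruple `(𝔥*, 𝔤*, α, β)` with `(α_p h)(x) = −p(ρ_x h)`,
`(β_q x)(h) = −q(ψ_h x)` and the dual actions (of `ρ`, `ad_𝔤`, `ad_𝔥`, `ψ`) is a
representation of `(𝔤, 𝔥, ρ, ψ)`. -/
theorem coadjoint_representation_of_matched_pair
    (k : Type*) [Field k] [CharZero k] {G H : Type*}
    [AddCommGroup G] [Module k G] [AddCommGroup H] [Module k H]
    (μ : G →ₗ[k] G →ₗ[k] G) (ν : H →ₗ[k] H →ₗ[k] H)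
    (ρ : G →ₗ[k] H →ₗ[k] H) (ψ : H →ₗ[k] G →ₗ[k] G)
    (hmp : IsMatchedPairP k (fun x y => μ x y) (fun h h' => ν h h')
      (fun x h => ρ x h) (fun h x => ψ h x)) :
    IsMPRepP k (fun x y => μ x y) (fun h h' => ν h h')
      (fun x h => ρ x h) (fun h x => ψ h x)
      -- 𝔤 acts on 𝔥* by the dual of ρ
      (fun (x : G) (q : Dual k H) => -((ρ x).dualMap q))
      -- 𝔥 acts on 𝔥* by the dual of ad_𝔥
      (fun (h : H) (q : Dual k H) => -((ν h).dualMap q))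
      -- 𝔤 acts on 𝔤* by the dual of ad_𝔤
      (fun (x : G) (q : Dual k G) => -((μ x).dualMap q))
      -- 𝔥 acts on 𝔤* by the dual of ψ
      (fun (h : H) (q : Dual k G) => -((ψ h).dualMap q))
      -- pairing maps
      (fun (p : Dual k H) (h : H) => -((ρ.flip h).dualMap p))
      (fun (q : Dual k G) (x : G) => -((ψ.flip x).dualMap q)) := by
  obtain ⟨hG, hH, hρ, hψ, hm1, hm2⟩ := hmp
  have hGad := lie_adP k hG
  have hHad := lie_adP k hH
  have hGanti := lie_antiP k hG
  have hHanti := lie_antiP k hH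
  refine ⟨⟨?_, ?_⟩, ⟨?_, ?_⟩, ⟨?_, ?_⟩, ⟨?_, ?_⟩, ?_, ?_, ?_, ?_, ?_, ?_, ?_, ?_⟩
  -- Bilin ρV
  · refine ⟨?_, ?_, ?_, ?_⟩ <;> intros <;> ext t <;> simp only [LinearMap.dualMap_apply, LinearMap.neg_apply,
      LinearMap.add_apply, LinearMap.smul_apply, LinearMap.flip_apply, map_add, map_smul,
      map_neg, smul_eq_mul, smul_neg] <;> ring
  -- rep ρV
  · intro x y q
    ext h
    simp only [LinearMap.dualMap_apply, LinearMap.neg_apply, LinearMap.sub_apply,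
      LinearMap.add_apply, LinearMap.flip_apply]
    have e := DFunLike.congr_arg q (hρ.2 x y h)
    simp only [map_sub, map_add, map_neg] at e
    linear_combination -e
  -- Bilin ψV
  · refine ⟨?_, ?_, ?_, ?_⟩ <;> intros <;> ext t <;> simp only [LinearMap.dualMap_apply, LinearMap.neg_apply,
      LinearMap.add_apply, LinearMap.smul_apply, LinearMap.flip_apply, map_add, map_smul,
      map_neg, smul_eq_mul, smul_neg] <;> ring
  -- rep ψV
  · intro h h' q
    ext g
    simp only [LinearMap.dualMap_apply, LinearMap.neg_apply, LinearMap.sub_apply,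
      LinearMap.add_apply, LinearMap.flip_apply]
    have e := DFunLike.congr_arg q (hHad h h' g)
    simp only [map_sub, map_add, map_neg] at e
    linear_combination -e
  -- Bilin ρW
  · refine ⟨?_, ?_, ?_, ?_⟩ <;> intros <;> ext t <;> simp only [LinearMap.dualMap_apply, LinearMap.neg_apply,
      LinearMap.add_apply, LinearMap.smul_apply, LinearMap.flip_apply, map_add, map_smul,
      map_neg, smul_eq_mul, smul_neg] <;> ring
  -- rep ρW
  · intro x y q
    ext g
    simp only [LinearMap.dualMap_apply, LinearMap.neg_apply, LinearMap.sub_apply,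
      LinearMap.add_apply, LinearMap.flip_apply]
    have e := DFunLike.congr_arg q (hGad x y g)
    simp only [map_sub, map_add, map_neg] at e
    linear_combination -e
  -- Bilin ψW
  · refine ⟨?_, ?_, ?_, ?_⟩ <;> intros <;> ext t <;> simp only [LinearMap.dualMap_apply, LinearMap.neg_apply,
      LinearMap.add_apply, LinearMap.smul_apply, LinearMap.flip_apply, map_add, map_smul,
      map_neg, smul_eq_mul, smul_neg] <;> ring
  -- rep ψW
  · intro h h' q
    ext g
    simp only [LinearMap.dualMap_apply, LinearMap.neg_apply, LinearMap.sub_apply,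
      LinearMap.add_apply, LinearMap.flip_apply]
    have e := DFunLike.congr_arg q (hψ.2 h h' g)
    simp only [map_sub, map_add, map_neg] at e
    linear_combination -e
  -- Bilin α
  · refine ⟨?_, ?_, ?_, ?_⟩ <;> intros <;> ext t <;> simp only [LinearMap.dualMap_apply, LinearMap.neg_apply,
      LinearMap.add_apply, LinearMap.smul_apply, LinearMap.flip_apply, map_add, map_smul,
      map_neg, smul_eq_mul, smul_neg] <;> ring
  -- Bilin β
  · refine ⟨?_, ?_, ?_, ?_⟩ <;> intros <;> ext t <;> simp only [LinearMap.dualMap_apply, LinearMap.neg_apply,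
      LinearMap.add_apply, LinearMap.smul_apply, LinearMap.flip_apply, map_add, map_smul,
      map_neg, smul_eq_mul, smul_neg] <;> ring
  -- condition α (ρV x v) h
  · intro x v h
    ext y
    simp only [LinearMap.dualMap_apply, LinearMap.neg_apply, LinearMap.sub_apply,
      LinearMap.add_apply, LinearMap.flip_apply]
    have e := DFunLike.congr_arg v (hρ.2 x y h)
    simp only [map_sub, map_add, map_neg] at e
    linear_combination -e
  -- condition β (ψW h w) x
  · intro h w x
    ext h'
    simp only [LinearMap.dualMap_apply, LinearMap.neg_apply, LinearMap.sub_apply,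
      LinearMap.add_apply, LinearMap.flip_apply]
    have e := DFunLike.congr_arg w (hψ.2 h h' x)
    simp only [map_sub, map_add, map_neg] at e
    linear_combination -e
  -- condition ρW x (ψW h w)
  · intro x h w
    ext y
    simp only [LinearMap.dualMap_apply, LinearMap.neg_apply, LinearMap.sub_apply,
      LinearMap.add_apply, LinearMap.flip_apply]
    have e := DFunLike.congr_arg w (hm2 h x y)
    simp only [map_sub, map_add, map_neg] at e
    linear_combination e
  -- condition α v (ν h h')
  · intro v h h'
    ext y
    simp only [LinearMap.dualMap_apply, LinearMap.neg_apply, LinearMap.sub_apply,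
      LinearMap.add_apply, LinearMap.flip_apply]
    have e := DFunLike.congr_arg v (hm1 y h h')
    have e2 := DFunLike.congr_arg v (hHanti (ρ y h) h')
    simp only [map_sub, map_add, map_neg] at e e2
    linear_combination -e - e2
  -- condition ψV h (ρV x v)
  · intro h x v
    ext h'
    simp only [LinearMap.dualMap_apply, LinearMap.neg_apply, LinearMap.sub_apply,
      LinearMap.add_apply, LinearMap.flip_apply]
    have e := DFunLike.congr_arg v (hm1 x h h')
    simp only [map_sub, map_add, map_neg] at e
    linear_combination e
  -- condition β w (μ x y)
  · intro w x y
    ext h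
    simp only [LinearMap.dualMap_apply, LinearMap.neg_apply, LinearMap.sub_apply,
      LinearMap.add_apply, LinearMap.flip_apply]
    have e := DFunLike.congr_arg w (hm2 h x y)
    have e2 := DFunLike.congr_arg w (hGanti (ψ h x) y)
    simp only [map_sub, map_add, map_neg] at e e2
    linear_combination -e - e2
end

section
/- Let 𝔤, 𝔥 be vector spaces with skew-symmetric bilinear maps μ: 𝔤 × 𝔤 → 𝔤, ν: 𝔥 × 𝔥 → 𝔥 and bilinear maps ρ: 𝔤 × 𝔥 → 𝔥, ψ: 𝔥 × 𝔤 → 𝔤. Define μ ⋉ ρ, ψ ⋊ ν ∈ Hom(Λ²(𝔤 ⊕ 𝔥), 𝔤 ⊕ 𝔥) by (μ ⋉ ρ)((x,h),(y,k)) = (μ(x,y), ρ_x k − ρ_y h) and (ψ ⋊ ν)((x,h),(y,k)) = (ψ_h y − ψ_k x, ν(h,k)). Then ((𝔤, μ), (𝔥, ν), ρ, ψ) is a matched pair of Lie algebras if and only if π = (μ ⋉ ρ) + (ψ ⋊ ν) satisfies [π, π]_NR = 0, i.e. π is a Maurer-Cartan element of the graded Lie algebra (⊕_{n≥0} M^n,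 [·,·]_NR). -/
noncomputable def insNR {G : Type*} [AddCommGroup G]
    (m n : ℕ) (f : (Fin (m+1) → G) → G) (g : (Fin (n+1) → G) → G) :
    (Fin (m+n+1) → G) → G :=
  fun x => ∑ σ : Equiv.Perm (Fin (m+n+1)),
    if (∀ i j : Fin (m+n+1), i < j → ((j : ℕ) < m+1 ∨ m+1 ≤ (i : ℕ)) → σ i < σ j) then
      ((Equiv.Perm.sign σ : ℤ)) •
        g (Fin.cons (f (fun i => x (σ ⟨i, by omega⟩)))
            (fun i : Fin n => x (σ ⟨m+1+(i:ℕ), by omega⟩)))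
    else 0

noncomputable def nrB {G : Type*} [AddCommGroup G]
    (m n : ℕ) (f : (Fin (m+1) → G) → G) (g : (Fin (n+1) → G) → G) :
    (Fin (m+n+1) → G) → G :=
  fun x => insNR m n f g x - ((-1 : ℤ)^(m*n)) • insNR n m g f (fun i => x ⟨i, by omega⟩)

def IsMultAlt (k : Type*) [Field k] {G : Type*} [AddCommGroup G] [Module k G]
    (n : ℕ) (f : (Fin n → G) → G) : Prop :=
  (∀ (x : Fin n → G) (i : Fin n) (a b : G),
      f (Function.update x i (a + b)) = f (Function.update x i a) + f (Function.update x i b)) ∧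
  (∀ (x : Fin n → G) (i : Fin n) (c : k) (a : G),
      f (Function.update x i (c • a)) = c • f (Function.update x i a)) ∧
  (∀ (x : Fin n → G) (i j : Fin n), i ≠ j → x i = x j → f x = 0)

def mcElt {G H : Type*} [AddCommGroup G] [AddCommGroup H]
    (μ : G → G → G) (ν : H → H → H) (ρ : G → H → H) (ψ : H → G → G) :
    (Fin 2 → G × H) → G × H :=
  fun x => bicross μ ν ρ ψ (x 0) (x 1)

section helpers
variable (k : Type*) [Field k] {A B C : Type*} [AddCommGroup A] [Module k A]
    [AddCommGroup B] [Module k B] [AddCommGroup C] [Module k C]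
    {f : A → B → C}

lemma bz1 (h : Bilin k f) (b : B) : f 0 b = 0 := by
  have := h.2.1 0 0 b; simpa using this

lemma bz2 (h : Bilin k f) (a : A) : f a 0 = 0 := by
  have := h.2.2.2 0 a 0; simpa using this

lemma bn1 (h : Bilin k f) (a : A) (b : B) : f (-a) b = - f a b := by
  have := h.2.1 (-1) a b; simpa using this

lemma bn2 (h : Bilin k f) (a : A) (b : B) : f a (-b) = - f a b := by
  have := h.2.2.2 (-1) a b; simpa using this

lemma bs1 (h : Bilin k f) (a a' : A) (b : B) : f (a - a') b = f a b - f a' b := by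
  rw [sub_eq_add_neg, h.1, bn1 k h, sub_eq_add_neg]

lemma bs2 (h : Bilin k f) (a : A) (b b' : B) : f a (b - b') = f a b - f a b' := by
  rw [sub_eq_add_neg, h.2.2.1, bn2 k h, sub_eq_add_neg]

end helpers

lemma anti {k : Type*} [Field k] {A : Type*} [AddCommGroup A] [Module k A]
    {f : A → A → A} (h : Bilin k f) (halt : ∀ a, f a a = 0) (a b : A) :
    f a b = - f b a := by
  have h0 := halt (a + b)
  rw [h.1, h.2.2.1, h.2.2.1, halt, halt, zero_add, add_zero] at h0
  exact eq_neg_of_add_eq_zero_left h0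

lemma keyG (k : Type*) [Field k] {G H : Type*} [AddCommGroup G] [Module k G]
    [AddCommGroup H] [Module k H]
    (μ : G → G → G) (ν : H → H → H) (ρ : G → H → H) (ψ : H → G → G)
    (hμbil : Bilin k μ) (hψbil : Bilin k ψ)
    (hμalt : ∀ a, μ a a = 0)
    (hμjac : ∀ a b c, μ (μ a b) c + μ (μ b c) a + μ (μ c a) b = 0)
    (hψrep : ∀ h h' a, ψ (ν h h') a = ψ h (ψ h' a) - ψ h' (ψ h a))
    (hcompat : ∀ h a b, ψ h (μ a b) = μ (ψ h a) b + μ a (ψ h b) + ψ (ρ b h) a - ψ (ρ a h) b)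
    (x y z : G) (h k' l : H) :
    μ (μ x y + ψ h y - ψ k' x) z + ψ (ν h k' + ρ x k' - ρ y h) z - ψ l (μ x y + ψ h y - ψ k' x)
    - (μ (μ x z + ψ h z - ψ l x) y + ψ (ν h l + ρ x l - ρ z h) y - ψ k' (μ x z + ψ h z - ψ l x))
    + (μ (μ y z + ψ k' z - ψ l y) x + ψ (ν k' l + ρ y l - ρ z k') x - ψ h (μ y z + ψ k' z - ψ l y)) = 0 := by
  have hcomm : ∀ (p : H) (a b : G), μ a (ψ p b) = - μ (ψ p b) a := fun p a b => anti hμbil hμalt _ _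
  have j := hμjac x y z
  rw [anti hμbil hμalt z x, bn1 k hμbil] at j
  simp only [hμbil.1, bs1 k hμbil, hψbil.1, bs1 k hψbil, hψbil.2.2.1, bs2 k hψbil,
    hψrep, hcompat, hcomm]
  rw [← j]
  abel

lemma insNR_one_one {G : Type*} [AddCommGroup G] (f : G → G → G) (x : Fin 3 → G) :
    insNR 1 1 (fun y => f (y 0) (y 1)) (fun y => f (y 0) (y 1)) x
      = f (f (x 0) (x 1)) (x 2) - f (f (x 0) (x 2)) (x 1) + f (f (x 1) (x 2)) (x 0) := by
  rw [insNR, ← Finset.sum_filter]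
  have h : (Finset.univ.filter (fun σ : Equiv.Perm (Fin 3) =>
      ∀ i j : Fin 3, i < j → ((j : ℕ) < 1+1 ∨ 1+1 ≤ (i : ℕ)) → σ i < σ j))
      = {1, Equiv.swap 1 2, finRotate 3} := by decide
  rw [h]
  rw [Finset.sum_insert (by decide), Finset.sum_insert (by decide), Finset.sum_singleton]
  have s1 : (Equiv.Perm.sign (1 : Equiv.Perm (Fin 3)) : ℤ) = 1 := by decide
  have s2 : (Equiv.Perm.sign (Equiv.swap (1:Fin 3) 2) : ℤ) = -1 := by decide
  have s3 : (Equiv.Perm.sign (finRotate 3) : ℤ) = 1 := by decide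
  rw [s1, s2, s3]
  have e1 : Equiv.swap (1:Fin 3) 2 0 = 0 := by decide
  have e2 : Equiv.swap (1:Fin 3) 2 1 = 2 := by decide
  have e3 : Equiv.swap (1:Fin 3) 2 2 = 1 := by decide
  norm_num [Fin.cons_zero, Fin.cons_one, e1, e2, e3]
  abel

lemma nrB_one_one {G : Type*} [AddCommGroup G] (f : G → G → G) (x : Fin 3 → G) :
    nrB 1 1 (fun y => f (y 0) (y 1)) (fun y => f (y 0) (y 1)) x
      = (f (f (x 0) (x 1)) (x 2) - f (f (x 0) (x 2)) (x 1) + f (f (x 1) (x 2)) (x 0))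
      + (f (f (x 0) (x 1)) (x 2) - f (f (x 0) (x 2)) (x 1) + f (f (x 1) (x 2)) (x 0)) := by
  have h0 : nrB 1 1 (fun y => f (y 0) (y 1)) (fun y => f (y 0) (y 1)) x
      = insNR 1 1 (fun y => f (y 0) (y 1)) (fun y => f (y 0) (y 1)) x
        - ((-1:ℤ)^(1*1)) • insNR 1 1 (fun y => f (y 0) (y 1)) (fun y => f (y 0) (y 1)) x := rfl
  rw [h0, insNR_one_one]
  norm_num
  abel

/-- Maurer-Cartan characterization. Given skew-symmetric bilinear
`μ, ν` and bilinear `ρ, ψ`, the quadruple `((𝔤,μ), (𝔥,ν), ρ, ψ)` is a matched pair of Lie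
algebras iff `π = (μ ⋉ ρ) + (ψ ⋊ ν)` satisfies `[π,π]_NR = 0`, i.e. `π` is a Maurer-Cartan
element of the graded Lie algebra `(⊕_{n≥0} M^n, [·,·]_NR)`. -/
theorem matched_pair_iff_maurer_cartan
    (k : Type*) [Field k] [CharZero k] {G H : Type*}
    [AddCommGroup G] [Module k G] [AddCommGroup H] [Module k H]
    (μ : G → G → G) (ν : H → H → H) (ρ : G → H → H) (ψ : H → G → G)
    (hμbil : Bilin k μ) (hνbil : Bilin k ν) (hρbil : Bilin k ρ) (hψbil : Bilin k ψ)
    (hμalt : ∀ x, μ x x = 0) (hνalt : ∀ h, ν h h = 0) :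
    IsMatchedPairP k μ ν ρ ψ ↔
      ∀ x : Fin 3 → G × H, nrB 1 1 (mcElt μ ν ρ ψ) (mcElt μ ν ρ ψ) x = 0 := by
  set Bb := bicross μ ν ρ ψ with hBbdef
  have hmcElt : mcElt μ ν ρ ψ = (fun y : Fin 2 → G × H => Bb (y 0) (y 1)) := rfl
  have hmc : (∀ x : Fin 3 → G × H, nrB 1 1 (mcElt μ ν ρ ψ) (mcElt μ ν ρ ψ) x = 0) ↔
      (∀ a b c : G × H, Bb (Bb a b) c - Bb (Bb a c) b + Bb (Bb b c) a = 0) := by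
    constructor
    · intro hx a b c
      have h1 := hx ![a, b, c]
      rw [hmcElt, nrB_one_one] at h1
      simp only [Matrix.cons_val_zero, Matrix.cons_val_one, Matrix.head_cons,
        Matrix.cons_val_two, Matrix.tail_cons] at h1
      set E := Bb (Bb a b) c - Bb (Bb a c) b + Bb (Bb b c) a with hE
      have h2 : (2:k) • E = 0 := by rw [two_smul]; exact h1
      have h3 := congrArg (fun v : G × H => (2:k)⁻¹ • v) h2
      simpa [smul_smul, inv_mul_cancel₀ (two_ne_zero' k)] using h3
    · intro hJ x
      rw [hmcElt, nrB_one_one, hJ]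
      simp
  rw [hmc]
  constructor
  · rintro ⟨⟨_, _, hμjac⟩, ⟨_, _, hνjac⟩, ⟨_, hρrep⟩, ⟨_, hψrep⟩, hc1, hc2⟩
    rintro ⟨x, hh⟩ ⟨y, kk⟩ ⟨z, ll⟩
    have hG := keyG k μ ν ρ ψ hμbil hψbil hμalt hμjac hψrep hc2 x y z hh kk ll
    have hH := keyG k ν μ ψ ρ hνbil hρbil hνalt hνjac hρrep hc1 hh kk ll x y z
    simp only [hBbdef, bicross, Prod.mk_sub_mk, Prod.mk_add_mk, Prod.mk_eq_zero]
    exact ⟨hG, hH⟩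
  · intro hJ
    have hGc : ∀ (x y z : G) (hh kk ll : H),
        μ (μ x y + ψ hh y - ψ kk x) z + ψ (ν hh kk + ρ x kk - ρ y hh) z - ψ ll (μ x y + ψ hh y - ψ kk x)
        - (μ (μ x z + ψ hh z - ψ ll x) y + ψ (ν hh ll + ρ x ll - ρ z hh) y - ψ kk (μ x z + ψ hh z - ψ ll x))
        + (μ (μ y z + ψ kk z - ψ ll y) x + ψ (ν kk ll + ρ y ll - ρ z kk) x - ψ hh (μ y z + ψ kk z - ψ ll y)) = 0 :=
      fun x y z hh kk ll => congrArg Prod.fst (hJ (x, hh) (y, kk) (z, ll))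
    have hHc : ∀ (hh kk ll : H) (x y z : G),
        ν (ν hh kk + ρ x kk - ρ y hh) ll + ρ (μ x y + ψ hh y - ψ kk x) ll - ρ z (ν hh kk + ρ x kk - ρ y hh)
        - (ν (ν hh ll + ρ x ll - ρ z hh) kk + ρ (μ x z + ψ hh z - ψ ll x) kk - ρ y (ν hh ll + ρ x ll - ρ z hh))
        + (ν (ν kk ll + ρ y ll - ρ z kk) hh + ρ (μ y z + ψ kk z - ψ ll y) hh - ρ x (ν kk ll + ρ y ll - ρ z kk)) = 0 :=
      fun hh kk ll x y z => congrArg Prod.snd (hJ (x, hh) (y, kk) (z, ll))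
    refine ⟨⟨hμbil, hμalt, ?_⟩, ⟨hνbil, hνalt, ?_⟩, ⟨hρbil, ?_⟩, ⟨hψbil, ?_⟩, ?_, ?_⟩
    · intro x y z
      have s := hGc x y z 0 0 0
      simp only [bz1 k hμbil, bz2 k hμbil, bz1 k hνbil, bz2 k hνbil, bz1 k hρbil, bz2 k hρbil,
        bz1 k hψbil, bz2 k hψbil, add_zero, zero_add, sub_zero, zero_sub, neg_zero,
        sub_neg_eq_add, neg_neg, bn1 k hμbil, bn1 k hνbil, bn1 k hρbil, bn1 k hψbil] at s
      rw [anti hμbil hμalt z x, bn1 k hμbil, ← s]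
      abel
    · intro x y z
      have s := hHc x y z 0 0 0
      simp only [bz1 k hμbil, bz2 k hμbil, bz1 k hνbil, bz2 k hνbil, bz1 k hρbil, bz2 k hρbil,
        bz1 k hψbil, bz2 k hψbil, add_zero, zero_add, sub_zero, zero_sub, neg_zero,
        sub_neg_eq_add, neg_neg, bn1 k hμbil, bn1 k hνbil, bn1 k hρbil, bn1 k hψbil] at s
      rw [anti hνbil hνalt z x, bn1 k hνbil, ← s]
      abel
    · intro x y hh
      have s := hHc 0 0 hh x y 0
      simp only [bz1 k hμbil, bz2 k hμbil, bz1 k hνbil, bz2 k hνbil, bz1 k hρbil, bz2 k hρbil,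
        bz1 k hψbil, bz2 k hψbil, add_zero, zero_add, sub_zero, zero_sub, neg_zero,
        sub_neg_eq_add, neg_neg, bn1 k hμbil, bn1 k hνbil, bn1 k hρbil, bn1 k hψbil] at s
      rw [← sub_eq_zero, ← s]
      abel
    · intro hh kk x
      have s := hGc 0 0 x hh kk 0
      simp only [bz1 k hμbil, bz2 k hμbil, bz1 k hνbil, bz2 k hνbil, bz1 k hρbil, bz2 k hρbil,
        bz1 k hψbil, bz2 k hψbil, add_zero, zero_add, sub_zero, zero_sub, neg_zero,
        sub_neg_eq_add, neg_neg, bn1 k hμbil, bn1 k hνbil, bn1 k hρbil, bn1 k hψbil] at s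
      rw [← sub_eq_zero, ← s]
      abel
    · intro x hh kk
      have s := hHc 0 hh kk x 0 0
      simp only [bz1 k hμbil, bz2 k hμbil, bz1 k hνbil, bz2 k hνbil, bz1 k hρbil, bz2 k hρbil,
        bz1 k hψbil, bz2 k hψbil, add_zero, zero_add, sub_zero, zero_sub, neg_zero,
        sub_neg_eq_add, neg_neg, bn1 k hμbil, bn1 k hνbil, bn1 k hρbil, bn1 k hψbil] at s
      rw [anti hνbil hνalt hh (ρ x kk), ← sub_eq_zero, ← neg_eq_zero.mpr s]
      abel
    · intro hh x y
      have s := hGc 0 x y hh 0 0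
      simp only [bz1 k hμbil, bz2 k hμbil, bz1 k hνbil, bz2 k hνbil, bz1 k hρbil, bz2 k hρbil,
        bz1 k hψbil, bz2 k hψbil, add_zero, zero_add, sub_zero, zero_sub, neg_zero,
        sub_neg_eq_add, neg_neg, bn1 k hμbil, bn1 k hνbil, bn1 k hρbil, bn1 k hψbil] at s
      rw [anti hμbil hμalt x (ψ hh y), ← sub_eq_zero, ← neg_eq_zero.mpr s]
      abel
end

section
/- Let (𝔤, 𝔥, ρ, ψ) be a matched pair of Lie algebras. The inclusion maps Φ_n: C^n(𝔤, 𝔥, ρ, ψ) → Hom(Λ^n(𝔤 ⊕ 𝔥), 𝔤 ⊕ 𝔥), (F_1,…,F_n) ↦ (0, F_1,…,F_n, 0), form a morphism of cochain complexes from the matched-pair cochain complex (with differential δ_MPL(F) = −[π, F]_NR) to the Chevalley-Eilenberg cochain complex of the bicrossed product Lie algebra 𝔤 ⋈ 𝔥 with coefficients in its adjoint representation. Hence there is an induced morphism H^•_MPL(𝔤, 𝔥, ρ, ψ) → H^•_CE(𝔤 ⋈ 𝔥; 𝔤 ⋈ 𝔥). -/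
/-- `F` belongs to `M^{n−1} = C^{n−1|0} ⊕ ⋯ ⊕ C^{0|n−1}`: all bidegree components of `F`
have nonnegative bidegrees, i.e. `F` maps all-`𝔤` tuples into `𝔤` and all-`𝔥` tuples
into `𝔥`. -/
def InM {G H : Type*} [AddCommGroup G] [AddCommGroup H]
    (n : ℕ) (F : (Fin n → G × H) → G × H) : Prop :=
  (∀ x : Fin n → G × H, (∀ i, (x i).2 = 0) → (F x).2 = 0) ∧
  (∀ x : Fin n → G × H, (∀ i, (x i).1 = 0) → (F x).1 = 0)

/-- The Chevalley-Eilenberg differential of a Lie algebra `(P, br)` with coefficients in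
the adjoint representation:
`(δf)(x₁,…,x_{m+2}) = Σᵢ (−1)^{i+1} [xᵢ, f(…,x̂ᵢ,…)] + Σ_{i<j} (−1)^{i+j} f([xᵢ,xⱼ],…,x̂ᵢ,…,x̂ⱼ,…)`
(written here with indices starting at `0`). -/
def ceDiff {P : Type*} [AddCommGroup P] (br : P → P → P)
    (m : ℕ) (F : (Fin (m+1) → P) → P) : (Fin (m+2) → P) → P :=
  fun x =>
    (∑ i : Fin (m+2), ((-1 : ℤ)^(i : ℕ)) • br (x i) (F (fun j => x (i.succAbove j)))) +
    ∑ i : Fin (m+2), ∑ j : Fin (m+2),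
      if (i : ℕ) < (j : ℕ) then
        ((-1 : ℤ)^((i : ℕ)+(j : ℕ))) •
          F (Fin.cons (br (x i) (x j))
              (fun l : Fin m =>
                x ⟨if (l : ℕ) < (i : ℕ) then (l : ℕ)
                   else if (l : ℕ) + 1 < (j : ℕ) then (l : ℕ) + 1 else (l : ℕ) + 2,
                   by split_ifs <;> omega⟩))
      else 0


lemma strictMono_eq_of_range {k N : ℕ} {u v : Fin k → Fin N}
    (hu : StrictMono u) (hv : StrictMono v)
    (h : ∀ y, (∃ a, u a = y) ↔ (∃ a, v a = y)) : u = v := by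
  have hs : (Finset.univ.image u).card = k := by
    rw [Finset.card_image_of_injective _ hu.injective, Finset.card_univ, Fintype.card_fin]
  have h1 := Finset.orderEmbOfFin_unique hs
    (f := u) (fun a => Finset.mem_image_of_mem _ (Finset.mem_univ a)) hu
  have h2 := Finset.orderEmbOfFin_unique hs (f := v)
    (fun a => by
      obtain ⟨c, hc⟩ := (h (v a)).mpr ⟨a, rfl⟩
      exact hc ▸ Finset.mem_image_of_mem _ (Finset.mem_univ c)) hv
  rw [h1, h2]

/-- The (n,1)-shuffle sending the last position to `c` and the rest increasingly
to the complement of `c`. -/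
def permB {n : ℕ} (c : Fin (n+1)) : Equiv.Perm (Fin (n+1)) :=
  (Fin.revPerm.trans (Fin.cycleRange c.rev).symm).trans Fin.revPerm

lemma permB_last {n : ℕ} (c : Fin (n+1)) : permB c (Fin.last n) = c := by
  simp [permB, Fin.rev_last]

lemma permB_castSucc {n : ℕ} (c : Fin (n+1)) (k : Fin n) :
    permB c (Fin.castSucc k) = c.succAbove k := by
  simp [permB, Fin.rev_castSucc, Fin.cycleRange_symm_succ, ← Fin.rev_succAbove]

lemma permB_sign {n : ℕ} (c : Fin (n+1)) :
    ((Equiv.Perm.sign (permB c) : ℤ)) = (-1)^((c.rev : ℕ)) := by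
  have h : permB c = Fin.revPerm * ((Fin.cycleRange c.rev).symm * Fin.revPerm) := rfl
  rw [h, map_mul, map_mul, Equiv.Perm.sign_symm, Fin.sign_cycleRange,
    mul_comm ((-1 : ℤˣ)^(c.rev : ℕ)) _, ← mul_assoc, Int.units_mul_self, one_mul]
  push_cast; ring

lemma permB_shuffle {n : ℕ} (c : Fin (n+1)) :
    ∀ i j : Fin (n+1), i < j → ((j : ℕ) < n ∨ n ≤ (i : ℕ)) → permB c i < permB c j := by
  intro i j hij hor
  rcases Fin.eq_castSucc_or_eq_last j with ⟨j', rfl⟩ | rfl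
  · have hjn : (j' : ℕ) < n := j'.isLt
    have hi : i ≠ Fin.last n := Fin.ne_last_of_lt hij
    obtain ⟨i', rfl⟩ := Fin.exists_castSucc_eq.mpr hi
    rw [permB_castSucc, permB_castSucc]
    exact (Fin.strictMono_succAbove c) (by simpa using hij)
  · rcases hor with h | h
    · simp [Fin.val_last] at h
    · exfalso; have h2 := hij; simp [Fin.lt_def, Fin.val_last] at h2; omega

lemma permB_uniq {n : ℕ} (σ : Equiv.Perm (Fin (n+1)))
    (hσ : ∀ i j : Fin (n+1), i < j → ((j : ℕ) < n ∨ n ≤ (i : ℕ)) → σ i < σ j) :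
    σ = permB (σ (Fin.last n)) := by
  set c := σ (Fin.last n) with hc
  have key : (fun k : Fin n => σ (Fin.castSucc k)) = (fun k => c.succAbove k) := by
    apply strictMono_eq_of_range
    · intro a b hab
      exact hσ _ _ (by simpa using hab) (Or.inl (by simpa using b.isLt))
    · exact Fin.strictMono_succAbove c
    · intro y
      constructor
      · rintro ⟨a, rfl⟩
        have hne : σ (Fin.castSucc a) ≠ c := by
          intro h
          exact absurd (σ.injective h) (by simp [Fin.ext_iff]; omega)
        obtain ⟨z, hz⟩ := Fin.exists_succAbove_eq (Ne.symm (Ne.symm hne))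
        exact ⟨z, hz⟩
      · rintro ⟨a, rfl⟩
        have hne : c.succAbove a ≠ c := Fin.succAbove_ne c a
        obtain ⟨w, hw⟩ := σ.surjective (c.succAbove a)
        have hwl : w ≠ Fin.last n := by
          intro h; subst h; rw [← hc] at hw; exact hne hw.symm
        obtain ⟨w', rfl⟩ := Fin.exists_castSucc_eq.mpr hwl
        exact ⟨w', hw⟩
  apply Equiv.ext
  intro a
  rcases Fin.eq_castSucc_or_eq_last a with ⟨a', rfl⟩ | rfl
  · rw [permB_castSucc]; exact congrFun key a'
  · rw [permB_last]

/-- position of `j-1` in `Fin (n+1)`. -/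
def jpred {n : ℕ} (j : Fin (n+2)) : Fin (n+1) := ⟨(j:ℕ)-1, by omega⟩

/-- The (2,n)-shuffle with `σ 0 = i`, `σ 1 = j` and the rest increasing. -/
def permA {n : ℕ} (i j : Fin (n+2)) : Equiv.Perm (Fin (n+2)) :=
  (Equiv.Perm.decomposeFin.symm (0, (Fin.cycleRange (jpred j)).symm)).trans
    (Fin.cycleRange i).symm

lemma permA_zero {n : ℕ} (i j : Fin (n+2)) : permA i j 0 = i := by
  simp [permA]

lemma succAbove_jpred {n : ℕ} {i j : Fin (n+2)} (hij : i < j) :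
    i.succAbove (jpred j) = j := by
  rw [Fin.succAbove_of_le_castSucc]
  · apply Fin.ext
    have : (1:ℕ) ≤ (j:ℕ) := by
      have := Fin.lt_def.mp hij; omega
    simp [Fin.val_succ, jpred]; omega
  · have := Fin.lt_def.mp hij
    rw [Fin.le_def]; simp [jpred]; omega

lemma permA_one {n : ℕ} {i j : Fin (n+2)} (hij : i < j) : permA i j 1 = j := by
  have h1 : (1 : Fin (n+2)) = (0 : Fin (n+1)).succ := rfl
  rw [permA, Equiv.trans_apply, h1, Equiv.Perm.decomposeFin_symm_apply_succ]
  simp [succAbove_jpred hij]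

lemma permA_tail {n : ℕ} (i j : Fin (n+2)) (k : Fin n) :
    permA i j k.succ.succ = i.succAbove ((jpred j).succAbove k) := by
  rw [permA, Equiv.trans_apply, Equiv.Perm.decomposeFin_symm_apply_succ]
  simp

lemma permA_sign {n : ℕ} (i j : Fin (n+2)) :
    ((Equiv.Perm.sign (permA i j) : ℤ)) = (-1)^((i:ℕ) + ((j:ℕ)-1)) := by
  have h : permA i j = (Fin.cycleRange i).symm *
      Equiv.Perm.decomposeFin.symm (0, (Fin.cycleRange (jpred j)).symm) := rfl
  rw [h, map_mul, Equiv.Perm.sign_symm, Fin.sign_cycleRange,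
    Equiv.Perm.decomposeFin.symm_sign, Equiv.Perm.sign_symm, Fin.sign_cycleRange]
  simp [jpred, pow_add]

lemma permA_shuffle {n : ℕ} {i j : Fin (n+2)} (hij : i < j) :
    ∀ a b : Fin (n+2), a < b → ((b : ℕ) < 1+1 ∨ 1+1 ≤ (a : ℕ)) → permA i j a < permA i j b := by
  intro a b hab hor
  rcases hor with h | h
  · -- a = 0, b = 1
    have hab' := Fin.lt_def.mp hab
    have ha : a = 0 := by
      apply Fin.ext; simp only [Fin.val_zero]; omega
    have hb : b = 1 := by
      apply Fin.ext; simp only [Fin.val_one]; omega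
    subst ha; subst hb
    rw [permA_zero, permA_one hij]; exact hij
  · -- both ≥ 2
    have hb2 : 2 ≤ (b : ℕ) := by have := Fin.lt_def.mp hab; omega
    set ka : Fin n := ⟨(a:ℕ)-2, by omega⟩
    set kb : Fin n := ⟨(b:ℕ)-2, by omega⟩
    have ea : a = ka.succ.succ := by apply Fin.ext; simp [ka]; omega
    have eb : b = kb.succ.succ := by apply Fin.ext; simp [kb]; omega
    rw [ea, eb, permA_tail, permA_tail]
    apply Fin.strictMono_succAbove
    apply Fin.strictMono_succAbove
    have := Fin.lt_def.mp hab
    rw [Fin.lt_def]; simp [ka, kb]; omega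

lemma permA_uniq {n : ℕ} (σ : Equiv.Perm (Fin (n+2)))
    (hσ : ∀ a b : Fin (n+2), a < b → ((b : ℕ) < 1+1 ∨ 1+1 ≤ (a : ℕ)) → σ a < σ b) :
    σ 0 < σ 1 ∧ σ = permA (σ 0) (σ 1) := by
  have h01 : σ 0 < σ 1 := by
    apply hσ
    · rw [Fin.lt_def]; norm_num
    · left; norm_num
  refine ⟨h01, ?_⟩
  set i := σ 0 with hi
  set j := σ 1 with hj
  have key : (fun k : Fin n => σ k.succ.succ) =
      (fun k : Fin n => i.succAbove ((jpred j).succAbove k)) := by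
    apply strictMono_eq_of_range
    · intro a b hab
      have hab' := Fin.lt_def.mp hab
      apply hσ
      · rw [Fin.lt_def]; simp only [Fin.val_succ]; omega
      · right; simp only [Fin.val_succ]; omega
    · exact fun a b hab => Fin.strictMono_succAbove i
        (Fin.strictMono_succAbove (jpred j) hab)
    · intro y
      have hchar : ∀ a : Fin n, σ a.succ.succ ≠ i ∧ σ a.succ.succ ≠ j := by
        intro a
        constructor
        · intro h; have := σ.injective (h.trans hi); simp [Fin.ext_iff] at this
        · intro h; have := σ.injective (h.trans hj); simp [Fin.ext_iff] at this
      constructor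
      · rintro ⟨a, rfl⟩
        obtain ⟨hni, hnj⟩ := hchar a
        obtain ⟨z, hz⟩ := Fin.exists_succAbove_eq (Ne.symm (Ne.symm hni))
        have hzj : z ≠ jpred j := by
          intro h; subst h; rw [succAbove_jpred h01] at hz; exact hnj hz.symm
        obtain ⟨w, hw⟩ := Fin.exists_succAbove_eq (Ne.symm (Ne.symm hzj))
        exact ⟨w, by rw [hw, hz]⟩
      · rintro ⟨a, rfl⟩
        have hni : i.succAbove ((jpred j).succAbove a) ≠ i := Fin.succAbove_ne _ _
        have hnj : i.succAbove ((jpred j).succAbove a) ≠ j := fun h =>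
          Fin.succAbove_ne (jpred j) a (Fin.succAbove_right_injective
            (h.trans (succAbove_jpred h01).symm))
        obtain ⟨w, hw⟩ := σ.surjective (i.succAbove ((jpred j).succAbove a))
        have hw0 : w ≠ 0 := by intro h; subst h; exact hni hw.symm
        have hw1 : w ≠ 1 := by intro h; subst h; exact hnj hw.symm
        have hw2 : 2 ≤ (w : ℕ) := by
          rcases Nat.lt_or_ge (w:ℕ) 2 with h | h
          · interval_cases hv : (w:ℕ)
            · exact absurd (Fin.ext hv) hw0
            · exact absurd (Fin.ext (by simpa using hv)) hw1
          · exact h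
        set kw : Fin n := ⟨(w:ℕ)-2, by omega⟩
        have ew : w = kw.succ.succ := by apply Fin.ext; simp [kw]; omega
        exact ⟨kw, by rw [← ew, hw]⟩
  apply Equiv.ext
  intro a
  rcases Nat.lt_or_ge (a:ℕ) 2 with h | h
  · interval_cases hv : (a:ℕ)
    · have : a = 0 := Fin.ext hv
      subst this; rw [permA_zero]
    · have : a = 1 := Fin.ext (by simpa using hv)
      subst this; rw [permA_one h01]
  · set ka : Fin n := ⟨(a:ℕ)-2, by omega⟩
    have ea : a = ka.succ.succ := by apply Fin.ext; simp [ka]; omega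
    rw [ea, permA_tail]
    exact congrFun key ka

lemma sum_shuffleB {n : ℕ} {P : Type*} [AddCommMonoid P] (t : Equiv.Perm (Fin (n+1)) → P) :
    (∑ σ : Equiv.Perm (Fin (n+1)),
      if (∀ i j : Fin (n+1), i < j → ((j:ℕ) < n ∨ n ≤ (i:ℕ)) → σ i < σ j) then t σ else 0)
      = ∑ c : Fin (n+1), t (permB c) := by
  rw [← Finset.sum_filter]
  refine Finset.sum_nbij' (fun σ => σ (Fin.last n)) (fun c => permB c) ?_ ?_ ?_ ?_ ?_
  · intro a _; exact Finset.mem_univ _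
  · intro c _
    simp only [Finset.mem_filter, Finset.mem_univ, true_and]
    exact permB_shuffle c
  · intro σ hσ
    simp only [Finset.mem_filter, Finset.mem_univ, true_and] at hσ
    exact (permB_uniq σ hσ).symm
  · intro c _; exact permB_last c
  · intro σ hσ
    simp only [Finset.mem_filter, Finset.mem_univ, true_and] at hσ
    exact congrArg t (permB_uniq σ hσ)

lemma sum_shuffleA {n : ℕ} {P : Type*} [AddCommMonoid P] (t : Equiv.Perm (Fin (n+2)) → P) :
    (∑ σ : Equiv.Perm (Fin (n+2)),
      if (∀ i j : Fin (n+2), i < j → ((j:ℕ) < 1+1 ∨ 1+1 ≤ (i:ℕ)) → σ i < σ j) then t σ else 0)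
      = ∑ p ∈ Finset.univ.filter (fun p : Fin (n+2) × Fin (n+2) => p.1 < p.2),
          t (permA p.1 p.2) := by
  rw [← Finset.sum_filter]
  refine Finset.sum_nbij' (fun σ => (σ 0, σ 1)) (fun p => permA p.1 p.2) ?_ ?_ ?_ ?_ ?_
  · intro σ hσ
    simp only [Finset.mem_filter, Finset.mem_univ, true_and] at hσ ⊢
    exact (permA_uniq σ hσ).1
  · intro p hp
    simp only [Finset.mem_filter, Finset.mem_univ, true_and] at hp ⊢
    exact permA_shuffle hp
  · intro σ hσ
    simp only [Finset.mem_filter, Finset.mem_univ, true_and] at hσ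
    exact ((permA_uniq σ hσ).2).symm
  · intro p hp
    simp only [Finset.mem_filter, Finset.mem_univ, true_and] at hp
    exact Prod.ext (permA_zero p.1 p.2) (permA_one hp)
  · intro σ hσ
    simp only [Finset.mem_filter, Finset.mem_univ, true_and] at hσ
    exact congrArg t (permA_uniq σ hσ).2

lemma insNR_B_eval {m : ℕ} {P : Type*} [AddCommGroup P] (b : P → P → P)
    (F : (Fin (m+1) → P) → P) (x : Fin (m+1+1) → P) :
    insNR m 1 F (fun z => b (z 0) (z 1)) x =
      ∑ c : Fin (m+2), ((-1:ℤ)^((Fin.rev c : ℕ))) •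
        b (F (fun l => x (c.succAbove l))) (x c) := by
  rw [insNR, sum_shuffleB (n := m+1)]
  apply Finset.sum_congr rfl
  intro c _
  have hsign := permB_sign c
  have harg1 : (fun i : Fin (m+1) => x (permB c ⟨(i:ℕ), by omega⟩)) =
      (fun l : Fin (m+1) => x (c.succAbove l)) := by
    funext i
    have : (⟨(i:ℕ), by omega⟩ : Fin (m+1+1)) = Fin.castSucc i := rfl
    rw [this, permB_castSucc]
  have harg2 : ∀ (i : Fin 1) (h : m+1+(i:ℕ) < m+1+1),
      permB c ⟨m+1+(i:ℕ), h⟩ = c := by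
    intro i h
    have : (⟨m+1+(i:ℕ), h⟩ : Fin (m+1+1)) = Fin.last (m+1) := by
      apply Fin.ext; simp only [Fin.val_last]; omega
    rw [this, permB_last]
  rw [harg1]
  have hcons : (Fin.cons (F (fun l => x (c.succAbove l)))
      (fun i : Fin 1 => x (permB c ⟨m+1+(i:ℕ), by omega⟩)) : Fin (1+1) → P) 1 =
      x c := by
    have h1 : (1 : Fin (1+1)) = Fin.succ 0 := rfl
    rw [h1, Fin.cons_succ, harg2]
  have hcons0 : (Fin.cons (F (fun l => x (c.succAbove l)))
      (fun i : Fin 1 => x (permB c ⟨m+1+(i:ℕ), by omega⟩)) : Fin (1+1) → P) 0 =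
      F (fun l => x (c.succAbove l)) := rfl
  show ((Equiv.Perm.sign (permB c) : ℤ)) • _ = _
  rw [hsign]
  congr 1
  show b _ _ = b _ _
  rw [hcons0, hcons]

lemma insNR_A_eval {m : ℕ} {P : Type*} [AddCommGroup P] (b : P → P → P)
    (F : (Fin (m+1) → P) → P) (x : Fin (m+2) → P) :
    insNR 1 m (fun z => b (z 0) (z 1)) F (fun i => x ⟨i, (by omega : (i:ℕ) < m + 1 + 1)⟩) =
      ∑ p ∈ Finset.univ.filter (fun p : Fin (m+2) × Fin (m+2) => p.1 < p.2),
        ((-1:ℤ)^((p.1:ℕ) + ((p.2:ℕ)-1))) •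
          F (Fin.cons (b (x p.1) (x p.2))
              (fun l : Fin m => x (p.1.succAbove ((jpred p.2).succAbove l)))) := by
  have hNe : 1+m+1 = m+2 := by omega
  set e : Equiv.Perm (Fin (1+m+1)) ≃ Equiv.Perm (Fin (m+2)) :=
    Equiv.permCongr (finCongr hNe) with he
  rw [insNR]
  rw [Fintype.sum_equiv e _
    (fun σ : Equiv.Perm (Fin (m+2)) =>
      if (∀ i j : Fin (m+2), i < j → ((j:ℕ) < 1+1 ∨ 1+1 ≤ (i:ℕ)) → σ i < σ j) then
        ((Equiv.Perm.sign σ : ℤ)) •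
          F (Fin.cons (b (x (σ 0)) (x (σ 1)))
              (fun l : Fin m => x (σ ⟨1+1+(l:ℕ), by omega⟩)))
      else 0)
    ?_]
  · rw [sum_shuffleA (n := m)]
    apply Finset.sum_congr rfl
    intro p hp
    have hplt : p.1 < p.2 := by
      simpa using (Finset.mem_filter.mp hp).2
    rw [permA_sign]
    congr 1
    congr 1
    funext l
    refine Fin.cases ?_ ?_ l
    · rw [Fin.cons_zero, Fin.cons_zero, permA_zero, permA_one hplt]
    · intro k
      rw [Fin.cons_succ, Fin.cons_succ]
      have hmk : (⟨1+1+(k:ℕ), by omega⟩ : Fin (m+2)) = k.succ.succ := by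
        apply Fin.ext; simp only [Fin.val_succ]; omega
      rw [hmk, permA_tail]
  · -- compatibility of the two bodies
    intro σ'
    have hval : ∀ (a : ℕ) (h1 : a < 1+m+1) (h2 : a < m+2),
        ((e σ') ⟨a, h2⟩ : ℕ) = ((σ' ⟨a, h1⟩ : Fin (1+m+1)) : ℕ) := fun a h1 h2 => rfl
    have hcond : (∀ i j : Fin (1+m+1), i < j → ((j:ℕ) < 1+1 ∨ 1+1 ≤ (i:ℕ)) → σ' i < σ' j)
        ↔ (∀ i j : Fin (m+2), i < j → ((j:ℕ) < 1+1 ∨ 1+1 ≤ (i:ℕ)) →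
            (e σ') i < (e σ') j) := by
      constructor
      · intro hc i j hij hor
        have h := hc ⟨(i:ℕ), by omega⟩ ⟨(j:ℕ), by omega⟩
          (by rw [Fin.lt_def]; exact Fin.lt_def.mp hij) hor
        rw [Fin.lt_def] at h ⊢
        rw [hval (i:ℕ) (by omega) i.isLt, hval (j:ℕ) (by omega) j.isLt]
        exact h
      · intro hc i j hij hor
        have h := hc ⟨(i:ℕ), by omega⟩ ⟨(j:ℕ), by omega⟩
          (by rw [Fin.lt_def]; exact Fin.lt_def.mp hij) hor
        rw [Fin.lt_def] at h ⊢
        rw [hval (i:ℕ) i.isLt (by omega), hval (j:ℕ) j.isLt (by omega)] at h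
        exact h
    dsimp only
    rw [if_congr hcond rfl rfl]
    by_cases hc : (∀ i j : Fin (m+2), i < j → ((j:ℕ) < 1+1 ∨ 1+1 ≤ (i:ℕ)) →
        (e σ') i < (e σ') j)
    · rw [if_pos hc, if_pos hc]
      have hsgn : Equiv.Perm.sign σ' = Equiv.Perm.sign (e σ') :=
        (Equiv.Perm.sign_permCongr (finCongr hNe) σ').symm
      rw [hsgn]
      congr 1
    · rw [if_neg hc, if_neg hc]

lemma neg_one_pow_congr' {a b : ℕ} (h : a % 2 = b % 2) : ((-1:ℤ))^a = (-1)^b := by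
  conv_lhs => rw [← Nat.div_add_mod a 2]
  conv_rhs => rw [← Nat.div_add_mod b 2]
  simp [pow_add, pow_mul, h]

lemma succAbove_succAbove_val {m : ℕ} {i j : Fin (m+2)} (hij : i < j) (l : Fin m) :
    ((i.succAbove ((jpred j).succAbove l)) : ℕ) =
      if (l:ℕ) < (i:ℕ) then (l:ℕ)
      else if (l:ℕ)+1 < (j:ℕ) then (l:ℕ)+1 else (l:ℕ)+2 := by
  have hij' := Fin.lt_def.mp hij
  have hjp : ((jpred j : Fin (m+1)) : ℕ) = (j:ℕ) - 1 := rfl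
  rcases Nat.lt_or_ge ((l:ℕ)+1) (j:ℕ) with hlj | hlj
  · have h1 : (jpred j).succAbove l = Fin.castSucc l := by
      rw [Fin.succAbove_of_castSucc_lt]
      rw [Fin.lt_def]; simp only [Fin.coe_castSucc, hjp]; omega
    rw [h1]
    rcases Nat.lt_or_ge (l:ℕ) (i:ℕ) with hli | hli
    · have h2 : i.succAbove (Fin.castSucc l) = Fin.castSucc (Fin.castSucc l) := by
        rw [Fin.succAbove_of_castSucc_lt]
        rw [Fin.lt_def]; simp only [Fin.coe_castSucc]; omega
      rw [h2]; simp only [Fin.coe_castSucc]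
      rw [if_pos hli]
    · have h2 : i.succAbove (Fin.castSucc l) = Fin.succ (Fin.castSucc l) := by
        rw [Fin.succAbove_of_le_castSucc]
        rw [Fin.le_def]; simp only [Fin.coe_castSucc]; omega
      rw [h2]; simp only [Fin.val_succ, Fin.coe_castSucc]
      rw [if_neg (by omega), if_pos hlj]
  · have h1 : (jpred j).succAbove l = Fin.succ l := by
      rw [Fin.succAbove_of_le_castSucc]
      rw [Fin.le_def]; simp only [Fin.coe_castSucc, hjp]; omega
    rw [h1]
    have h2 : i.succAbove (Fin.succ l) = Fin.succ (Fin.succ l) := by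
      rw [Fin.succAbove_of_le_castSucc]
      rw [Fin.le_def]; simp only [Fin.coe_castSucc, Fin.val_succ]; omega
    rw [h2]; simp only [Fin.val_succ]
    rw [if_neg (by omega), if_neg (by omega)]

theorem ce_eq_nr {m : ℕ} {P : Type*} [AddCommGroup P] (b : P → P → P)
    (hskew : ∀ u v, b u v = - b v u)
    (F : (Fin (m+1) → P) → P) (x : Fin (m+2) → P) :
    ceDiff b m F x = -(nrB 1 m (fun z => b (z 0) (z 1)) F (fun i => x ⟨(i:ℕ), (by omega : (i:ℕ) < m + 1 + 1)⟩)) := by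
  have hnr : nrB 1 m (fun z => b (z 0) (z 1)) F (fun i => x ⟨(i:ℕ), (by omega : (i:ℕ) < m + 1 + 1)⟩) =
      (∑ p ∈ Finset.univ.filter (fun p : Fin (m+2) × Fin (m+2) => p.1 < p.2),
        ((-1:ℤ)^((p.1:ℕ) + ((p.2:ℕ)-1))) • F (Fin.cons (b (x p.1) (x p.2))
            (fun l : Fin m => x (p.1.succAbove ((jpred p.2).succAbove l)))))
      - ((-1:ℤ)^(1*m)) • (∑ c : Fin (m+2), ((-1:ℤ)^((Fin.rev c : ℕ))) •
          b (F (fun l => x (c.succAbove l))) (x c)) := by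
    rw [nrB]
    exact congrArg₂ (fun u v => u - ((-1:ℤ)^(1*m)) • v)
      (insNR_A_eval b F x) (insNR_B_eval b F x)
  rw [hnr, ceDiff, neg_sub]
  have hA : (∑ i : Fin (m+2), ((-1 : ℤ)^(i : ℕ)) • b (x i) (F (fun j => x (i.succAbove j))))
      = ((-1:ℤ)^(1*m)) • (∑ c : Fin (m+2), ((-1:ℤ)^((Fin.rev c : ℕ))) •
          b (F (fun l => x (c.succAbove l))) (x c)) := by
    rw [Finset.smul_sum]
    apply Finset.sum_congr rfl
    intro c _
    rw [hskew (x c), smul_neg, ← neg_smul, smul_smul]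
    congr 1
    have hc : (Fin.rev c : ℕ) = m + 1 - (c:ℕ) := by rw [Fin.val_rev]; omega
    have h1 : -((-1:ℤ)^(c:ℕ)) = (-1:ℤ)^((c:ℕ)+1) := by rw [pow_succ]; ring
    rw [h1, ← pow_add, hc]
    apply neg_one_pow_congr'
    have := c.isLt
    omega
  have hB : - (∑ p ∈ Finset.univ.filter (fun p : Fin (m+2) × Fin (m+2) => p.1 < p.2),
        ((-1:ℤ)^((p.1:ℕ) + ((p.2:ℕ)-1))) • F (Fin.cons (b (x p.1) (x p.2))
            (fun l : Fin m => x (p.1.succAbove ((jpred p.2).succAbove l)))))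
      = ∑ i : Fin (m+2), ∑ j : Fin (m+2),
          if (i : ℕ) < (j : ℕ) then
            ((-1 : ℤ)^((i : ℕ)+(j : ℕ))) •
              F (Fin.cons (b (x i) (x j))
                  (fun l : Fin m =>
                    x ⟨if (l : ℕ) < (i : ℕ) then (l : ℕ)
                       else if (l : ℕ) + 1 < (j : ℕ) then (l : ℕ) + 1 else (l : ℕ) + 2,
                       by split_ifs <;> omega⟩))
          else 0 := by
    rw [← Finset.sum_neg_distrib, Finset.sum_filter, ← Finset.univ_product_univ,
      Finset.sum_product]
    apply Finset.sum_congr rfl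
    intro i _
    apply Finset.sum_congr rfl
    intro j _
    by_cases hij : i < j
    · rw [if_pos hij, if_pos (Fin.lt_def.mp hij)]
      have hcons : (Fin.cons (b (x i) (x j))
            (fun l : Fin m => x (i.succAbove ((jpred j).succAbove l))) : Fin (m+1) → P) =
          Fin.cons (b (x i) (x j))
            (fun l : Fin m =>
              x ⟨if (l : ℕ) < (i : ℕ) then (l : ℕ)
                 else if (l : ℕ) + 1 < (j : ℕ) then (l : ℕ) + 1 else (l : ℕ) + 2,
                 by split_ifs <;> omega⟩) := by
        funext l
        refine Fin.cases rfl ?_ l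
        intro k
        rw [Fin.cons_succ, Fin.cons_succ]
        exact congrArg x (Fin.ext (succAbove_succAbove_val hij k))
      rw [hcons, ← neg_smul]
      congr 1
      have hj1 : (i:ℕ) + (j:ℕ) = ((i:ℕ) + ((j:ℕ)-1)) + 1 := by
        have := Fin.lt_def.mp hij; omega
      rw [hj1, pow_succ]; ring
    · rw [if_neg hij, if_neg (fun h => hij (Fin.lt_def.mpr h))]
  rw [hA, ← hB, sub_eq_add_neg]

lemma anti_of_alt {A : Type*} [AddCommGroup A] (f : A → A → A)
    (hl : ∀ a a' c, f (a+a') c = f a c + f a' c)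
    (hr : ∀ a b b', f a (b+b') = f a b + f a b')
    (halt : ∀ a, f a a = 0) : ∀ a c, f a c = - f c a := by
  intro a c
  have h := halt (a + c)
  rw [hl, hr, hr, halt, halt, zero_add, add_zero] at h
  exact eq_neg_of_add_eq_zero_left h

lemma bilin_zero_right {A B C : Type*} [AddCommGroup B] [AddCommGroup C] {f : A → B → C}
    (hr : ∀ a b b', f a (b+b') = f a b + f a b') (a : A) : f a 0 = 0 := by
  have h1 : f a 0 + f a 0 = 0 + f a 0 := by
    rw [← hr, zero_add, zero_add]
  exact add_right_cancel h1

lemma bilin_zero_left {A B C : Type*} [AddCommGroup A] [AddCommGroup C] {f : A → B → C}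
    (hl : ∀ a a' c, f (a+a') c = f a c + f a' c) (c : B) : f 0 c = 0 := by
  have h1 : f 0 c + f 0 c = 0 + f 0 c := by
    rw [← hl, zero_add, zero_add]
  exact add_right_cancel h1

/-- For a matched pair of Lie algebras `(𝔤, 𝔥, ρ, ψ)`, the inclusions
`Φₙ : Cⁿ(𝔤,𝔥,ρ,ψ) ↪ Hom(Λⁿ(𝔤⊕𝔥), 𝔤⊕𝔥)` form a morphism of cochain complexes from the
matched-pair complex (with differential `δ_MPL F = −[π, F]_NR`) to the Chevalley-Eilenberg
complex of the bicrossed product `𝔤 ⋈ 𝔥` with adjoint coefficients: the differentials agree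
on `M^•`, and `δ_MPL` preserves `M^•`; hence there is an induced morphism
`H^•_MPL(𝔤,𝔥,ρ,ψ) → H^•_CE(𝔤 ⋈ 𝔥; 𝔤 ⋈ 𝔥)`. -/
theorem mpl_complex_maps_to_chevalley_eilenberg
    (k : Type*) [Field k] [CharZero k] {G H : Type*}
    [AddCommGroup G] [Module k G] [AddCommGroup H] [Module k H]
    (μ : G → G → G) (ν : H → H → H) (ρ : G → H → H) (ψ : H → G → G)
    (hmp : IsMatchedPairP k μ ν ρ ψ) :
    ∀ (m : ℕ) (F : (Fin (m+1) → G × H) → G × H),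
      IsMultAlt k (m+1) F → InM (m+1) F →
      -- the Chevalley-Eilenberg differential of Φ(F) equals Φ(δ_MPL F) = −[π, F]_NR
      ((∀ x : Fin (m+2) → G × H,
          ceDiff (bicross μ ν ρ ψ) m F x =
            -(nrB 1 m (mcElt μ ν ρ ψ) F (fun i => x ⟨i, by omega⟩))) ∧
      -- δ_MPL F again lies in M^•, so Φ is a chain map
        InM (m+2) (fun x : Fin (m+2) → G × H =>
          -(nrB 1 m (mcElt μ ν ρ ψ) F (fun i => x ⟨i, by omega⟩)))) := by
  obtain ⟨hμ, hν, hρ, hψ, _, _⟩ := hmp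
  obtain ⟨⟨hμal, _, hμar, _⟩, hμalt, _⟩ := hμ
  obtain ⟨⟨hνal, _, hνar, _⟩, hναlt, _⟩ := hν
  obtain ⟨⟨hρal, _, hρar, _⟩, _⟩ := hρ
  obtain ⟨⟨hψal, _, hψar, _⟩, _⟩ := hψ
  have hμanti := anti_of_alt μ hμal hμar hμalt
  have hνanti := anti_of_alt ν hνal hνar hναlt
  have hskew : ∀ u v : G × H, bicross μ ν ρ ψ u v = - bicross μ ν ρ ψ v u := by
    intro u v
    have h1 := hμanti u.1 v.1
    have h2 := hνanti u.2 v.2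
    apply Prod.ext
    · show μ u.1 v.1 + ψ u.2 v.1 - ψ v.2 u.1 =
        -(μ v.1 u.1 + ψ v.2 u.1 - ψ u.2 v.1)
      rw [h1]; abel
    · show ν u.2 v.2 + ρ u.1 v.2 - ρ v.1 u.2 =
        -(ν v.2 u.2 + ρ v.1 u.2 - ρ u.1 v.2)
      rw [h2]; abel
  intro m F _ hInM
  have part1 : ∀ x : Fin (m+2) → G × H,
      ceDiff (bicross μ ν ρ ψ) m F x =
        -(nrB 1 m (mcElt μ ν ρ ψ) F (fun i => x ⟨i, by omega⟩)) :=
    fun x => ce_eq_nr (bicross μ ν ρ ψ) hskew F x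
  have hρ0 : ∀ u, ρ u (0:H) = 0 := bilin_zero_right hρar
  have hψ0 : ∀ u, ψ u (0:G) = 0 := bilin_zero_right hψar
  have hν0 : ∀ v, ν (0:H) v = 0 := bilin_zero_left hνal
  have hμ0 : ∀ v, μ (0:G) v = 0 := bilin_zero_left hμal
  refine ⟨part1, ?_, ?_⟩
  · -- second components vanish on all-𝔤 tuples
    intro x hx
    dsimp only
    rw [(part1 x).symm, ceDiff]
    have hterm1 : ∀ i : Fin (m+2),
        (((-1 : ℤ)^(i : ℕ)) • bicross μ ν ρ ψ (x i)
          (F (fun j => x (i.succAbove j)))).2 = 0 := by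
      intro i
      have hF2 : (F (fun j => x (i.succAbove j))).2 = 0 :=
        hInM.1 _ (fun j => hx _)
      rw [Prod.smul_snd]
      show ((-1:ℤ)^(i:ℕ)) • (ν (x i).2 (F (fun j => x (i.succAbove j))).2
        + ρ (x i).1 (F (fun j => x (i.succAbove j))).2
        - ρ (F (fun j => x (i.succAbove j))).1 (x i).2) = 0
      rw [hF2, hx i, hρ0, hρ0, hν0]
      simp
    have hterm2 : ∀ i j : Fin (m+2),
        ((if (i : ℕ) < (j : ℕ) then
          ((-1 : ℤ)^((i : ℕ)+(j : ℕ))) •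
            F (Fin.cons (bicross μ ν ρ ψ (x i) (x j))
                (fun l : Fin m =>
                  x ⟨if (l : ℕ) < (i : ℕ) then (l : ℕ)
                     else if (l : ℕ) + 1 < (j : ℕ) then (l : ℕ) + 1 else (l : ℕ) + 2,
                     by split_ifs <;> omega⟩))
          else 0) : G × H).2 = 0 := by
      intro i j
      rw [apply_ite Prod.snd]
      split_ifs with hij
      · rw [Prod.smul_snd]
        have hF2 : (F (Fin.cons (bicross μ ν ρ ψ (x i) (x j))
            (fun l : Fin m =>
              x ⟨if (l : ℕ) < (i : ℕ) then (l : ℕ)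
                 else if (l : ℕ) + 1 < (j : ℕ) then (l : ℕ) + 1 else (l : ℕ) + 2,
                 by split_ifs <;> omega⟩))).2 = 0 := by
          apply hInM.1
          intro l
          refine Fin.cases ?_ ?_ l
          · rw [Fin.cons_zero]
            show (ν (x i).2 (x j).2 + ρ (x i).1 (x j).2 - ρ (x j).1 (x i).2) = 0
            rw [hx i, hx j, hρ0, hρ0, hν0]
            simp
          · intro w
            rw [Fin.cons_succ]
            exact hx _
        rw [hF2, smul_zero]
      · rfl
    rw [Prod.snd_add, Prod.snd_sum, Prod.snd_sum]
    rw [Finset.sum_eq_zero (fun i _ => hterm1 i), zero_add]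
    apply Finset.sum_eq_zero
    intro i _
    rw [Prod.snd_sum]
    exact Finset.sum_eq_zero (fun j _ => hterm2 i j)
  · -- first components vanish on all-𝔥 tuples
    intro x hx
    dsimp only
    rw [(part1 x).symm, ceDiff]
    have hterm1 : ∀ i : Fin (m+2),
        (((-1 : ℤ)^(i : ℕ)) • bicross μ ν ρ ψ (x i)
          (F (fun j => x (i.succAbove j)))).1 = 0 := by
      intro i
      have hF1 : (F (fun j => x (i.succAbove j))).1 = 0 :=
        hInM.2 _ (fun j => hx _)
      rw [Prod.smul_fst]
      show ((-1:ℤ)^(i:ℕ)) • (μ (x i).1 (F (fun j => x (i.succAbove j))).1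
        + ψ (x i).2 (F (fun j => x (i.succAbove j))).1
        - ψ (F (fun j => x (i.succAbove j))).2 (x i).1) = 0
      rw [hF1, hx i, hψ0, hψ0, hμ0]
      simp
    have hterm2 : ∀ i j : Fin (m+2),
        ((if (i : ℕ) < (j : ℕ) then
          ((-1 : ℤ)^((i : ℕ)+(j : ℕ))) •
            F (Fin.cons (bicross μ ν ρ ψ (x i) (x j))
                (fun l : Fin m =>
                  x ⟨if (l : ℕ) < (i : ℕ) then (l : ℕ)
                     else if (l : ℕ) + 1 < (j : ℕ) then (l : ℕ) + 1 else (l : ℕ) + 2,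
                     by split_ifs <;> omega⟩))
          else 0) : G × H).1 = 0 := by
      intro i j
      rw [apply_ite Prod.fst]
      split_ifs with hij
      · rw [Prod.smul_fst]
        have hF1 : (F (Fin.cons (bicross μ ν ρ ψ (x i) (x j))
            (fun l : Fin m =>
              x ⟨if (l : ℕ) < (i : ℕ) then (l : ℕ)
                 else if (l : ℕ) + 1 < (j : ℕ) then (l : ℕ) + 1 else (l : ℕ) + 2,
                 by split_ifs <;> omega⟩))).1 = 0 := by
          apply hInM.2
          intro l
          refine Fin.cases ?_ ?_ l
          · rw [Fin.cons_zero]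
            show (μ (x i).1 (x j).1 + ψ (x i).2 (x j).1 - ψ (x j).2 (x i).1) = 0
            rw [hx i, hx j, hψ0, hψ0, hμ0]
            simp
          · intro w
            rw [Fin.cons_succ]
            exact hx _
        rw [hF1, smul_zero]
      · rfl
    rw [Prod.fst_add, Prod.fst_sum, Prod.fst_sum]
    rw [Finset.sum_eq_zero (fun i _ => hterm1 i), zero_add]
    apply Finset.sum_eq_zero
    intro i _
    rw [Prod.fst_sum]
    exact Finset.sum_eq_zero (fun j _ => hterm2 i j)
end

section
/- Let (𝒢, {μ_k}_{k≥1}) be an L_∞-algebra and ℛ: 𝒢 → 𝒢 a strict Rota-Baxter operator of weight 1. Then the diagonal 𝒢_diag = {(x,x) : x ∈ 𝒢} and the graph 𝒢_ℛ = {(ℛ(x), x + ℛ(x)) : x ∈ 𝒢} are both L_∞-subalgebras of the direct product L_∞-algebra (𝒢 ⊕ 𝒢, {μ_k ⊕ μ_k}), and 𝒢 ⊕ 𝒢 = 𝒢_diag ⊕ 𝒢_ℛ as graded vector spaces. -/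
/-- `f : 𝒢^k → 𝒢` is multilinear. -/
def IsMultilin (k : Type*) [Field k] {G : Type*} [AddCommGroup G] [Module k G]
    (n : ℕ) (f : (Fin n → G) → G) : Prop :=
  (∀ (x : Fin n → G) (i : Fin n) (a b : G),
      f (Function.update x i (a + b)) = f (Function.update x i a) + f (Function.update x i b)) ∧
  (∀ (x : Fin n → G) (i : Fin n) (c : k) (a : G),
      f (Function.update x i (c • a)) = c • f (Function.update x i a))

open scoped Classical in
/-- `ℛ` is a strict Rota-Baxter operator of weight `1` on the `L_∞`-algebra
`(𝒢, {μ_k})`: for all `k ≥ 1`,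
`μ_k(ℛx₁,…,ℛx_k) = ℛ(Σ_{∅ ≠ S ⊆ {1,…,k}} μ_k(…)), ` where in the summand for `S` the
arguments in positions of `S` are undecorated and all others carry `ℛ`. -/
def IsStrictRotaBaxterWeightOne (k : Type*) [Field k] {G : Type*}
    [AddCommGroup G] [Module k G] (μ : ∀ n : ℕ, (Fin n → G) → G) (R : G →ₗ[k] G) : Prop :=
  ∀ (n : ℕ) (x : Fin n → G),
    μ n (fun i => R (x i)) =
      R (∑ S ∈ Finset.univ.powerset.filter (fun S : Finset (Fin n) => S.Nonempty),
          μ n (fun i => if i ∈ S then x i else R (x i)))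

/-- Let `(𝒢, {μ_k}_{k≥1})` be an `L_∞`-algebra and `ℛ` a strict
Rota-Baxter operator of weight `1`. Then the diagonal `𝒢_diag = {(x,x)}` and the graph
`𝒢_ℛ = {(ℛx, x + ℛx)}` are both `L_∞`-subalgebras of the direct product
`(𝒢 ⊕ 𝒢, {μ_k ⊕ μ_k})`, and `𝒢 ⊕ 𝒢 = 𝒢_diag ⊕ 𝒢_ℛ` as graded vector spaces. -/
theorem rota_baxter_diagonal_and_graph_subalgebras
    (k : Type*) [Field k] [CharZero k] {G : Type*} [AddCommGroup G] [Module k G]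
    (μ : ∀ n : ℕ, (Fin n → G) → G)
    (hmult : ∀ n, IsMultilin k n (μ n))
    (R : G →ₗ[k] G)
    (hRB : IsStrictRotaBaxterWeightOne k μ R) :
    -- the diagonal is closed under all the structure maps `μ_k ⊕ μ_k`
    (∀ (n : ℕ) (x : Fin n → G),
        ∃ a : G, (μ n (fun i => ((x i, x i) : G × G).1), μ n (fun i => (x i, x i).2))
          = (a, a)) ∧
    -- the graph of `ℛ` is closed under all the structure maps `μ_k ⊕ μ_k`
    (∀ (n : ℕ) (x : Fin n → G),
        ∃ a : G, (μ n (fun i => ((R (x i), x i + R (x i)) : G × G).1),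
                  μ n (fun i => (R (x i), x i + R (x i)).2))
          = (R a, a + R a)) ∧
    -- `𝒢 ⊕ 𝒢 = 𝒢_diag ⊕ 𝒢_ℛ`: every element decomposes uniquely
    (∀ p : G × G, ∃ a b : G, p = ((a, a) : G × G) + (R b, b + R b) ∧
        ∀ a' b' : G, p = ((a', a') : G × G) + (R b', b' + R b') → a = a' ∧ b = b') := by

  classical
  -- package `μ n` as a multilinear map
  let F : ∀ n : ℕ, MultilinearMap k (fun _ : Fin n => G) G := fun n =>
    { toFun := μ n
      map_update_add' := fun {inst} x i a b => by
        have : inst = instDecidableEqFin n := Subsingleton.elim _ _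
        subst this; exact (hmult n).1 x i a b
      map_update_smul' := fun {inst} x i c a => by
        have : inst = instDecidableEqFin n := Subsingleton.elim _ _
        subst this; exact (hmult n).2 x i c a }
  have hexp : ∀ (n : ℕ) (x : Fin n → G),
      μ n (fun i => x i + R (x i)) =
        μ n (fun i => R (x i)) +
          ∑ S ∈ Finset.univ.powerset.filter (fun S : Finset (Fin n) => S.Nonempty),
            μ n (fun i => if i ∈ S then x i else R (x i)) := by
    intro n x
    have h := (F n).map_add_univ x (fun i => R (x i))
    have hfil : Finset.univ.powerset.filter (fun S : Finset (Fin n) => S.Nonempty)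
        = (Finset.univ : Finset (Finset (Fin n))).erase ∅ := by
      ext S
      simp [Finset.nonempty_iff_ne_empty]
    have hsplit := Finset.add_sum_erase (Finset.univ : Finset (Finset (Fin n)))
      (fun s => (F n) (s.piecewise x (fun i => R (x i))))
      (Finset.mem_univ (∅ : Finset (Fin n)))
    have hpw : ∀ s : Finset (Fin n),
        (s.piecewise x (fun i => R (x i))) = fun i => if i ∈ s then x i else R (x i) := by
      intro s; funext i; simp [Finset.piecewise]
    have hx : (x + fun i => R (x i)) = fun i => x i + R (x i) := rfl
    have hempty : ((∅ : Finset (Fin n)).piecewise x (fun i => R (x i)))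
        = fun i => R (x i) := by
      funext i; simp [Finset.piecewise]
    calc μ n (fun i => x i + R (x i)) = (F n) (x + fun i => R (x i)) := by rw [hx]; rfl
      _ = ∑ s : Finset (Fin n), (F n) (s.piecewise x (fun i => R (x i))) := h
      _ = (F n) ((∅ : Finset (Fin n)).piecewise x (fun i => R (x i))) +
            ∑ s ∈ (Finset.univ : Finset (Finset (Fin n))).erase ∅,
              (F n) (s.piecewise x (fun i => R (x i))) := hsplit.symm
      _ = μ n (fun i => R (x i)) +
            ∑ S ∈ Finset.univ.powerset.filter (fun S : Finset (Fin n) => S.Nonempty),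
              μ n (fun i => if i ∈ S then x i else R (x i)) := by
          rw [hfil, hempty]
          refine congrArg₂ (· + ·) rfl ?_
          exact Finset.sum_congr rfl (fun s _ => by rw [hpw s]; rfl)
  refine ⟨?_, ?_, ?_⟩
  · intro n x
    exact ⟨μ n x, rfl⟩
  · intro n x
    refine ⟨∑ S ∈ Finset.univ.powerset.filter (fun S : Finset (Fin n) => S.Nonempty),
        μ n (fun i => if i ∈ S then x i else R (x i)), ?_⟩
    have h1 := hRB n x
    simp only [Prod.mk.injEq]
    constructor
    · exact h1
    · rw [hexp n x, h1, add_comm]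
  · intro p
    refine ⟨p.1 - R (p.2 - p.1), p.2 - p.1, ?_, ?_⟩
    · apply Prod.ext <;> simp
    · intro a' b' h
      have h1 : p.1 = a' + R b' := congrArg Prod.fst h
      have h2 : p.2 = a' + (b' + R b') := congrArg Prod.snd h
      have hb : p.2 - p.1 = b' := by rw [h1, h2]; abel
      constructor
      · rw [hb, h1]; abel
      · exact hb
end
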